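/- arXiv:2303.06838 — 4 statements merged into one kernel-verified Lean document; each statement's English description precedes it below -/
import Mathlib

section
/- Let n ≥ 2 be an integer, ω > 0, and 0 < β < 1/2. If γ ≥ max{ 1/2, (1/(2q))^{log(2β)/((1+ω)·log n)} }, then with probability at least 1 − μ(T > n) − n^{−ω} − c·n^{−(1+ω)}, we have T ≤ n and TOC(T) ≤ n · oc(β·ᾱ). -/
open MeasureTheory ProbabilityTheory

/-- Pull-out/Markov-type helper: if the conditional probability of `U` given `m` is at least `p`
on the support of a nonnegative bounded `m`-measurable function `f`, then
`p * ∫ f ≤ ∫ f · 1_U`. -/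
lemma stmt11_pull {Ω : Type*} {m : MeasurableSpace Ω} [mΩ : MeasurableSpace Ω]
    (μ : Measure Ω) [IsProbabilityMeasure μ]
    (hm : m ≤ mΩ) {U : Set Ω} (hU : MeasurableSet[mΩ] U)
    {f : Ω → ℝ} (hf : StronglyMeasurable[m] f) (hf0 : ∀ x, 0 ≤ f x) {C : ℝ}
    (hfC : ∀ᵐ x ∂μ, f x ≤ C) {p : ℝ}
    (hfp : ∀ᵐ x ∂μ, 0 < f x → p ≤ (μ[Set.indicator U (fun _ => (1:ℝ)) | m]) x) :
    p * ∫ x, f x ∂μ ≤ ∫ x, f x * Set.indicator U (fun _ => (1:ℝ)) x ∂μ := by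
  set g : Ω → ℝ := Set.indicator U (fun _ => (1:ℝ)) with hg
  have hgint : Integrable g μ := (integrable_const (1:ℝ)).indicator hU
  have hfmeas : AEStronglyMeasurable f μ := (hf.mono hm).aestronglyMeasurable
  have hfC' : ∀ᵐ x ∂μ, ‖f x‖ ≤ C := by
    filter_upwards [hfC] with x hx
    rwa [Real.norm_eq_abs, abs_of_nonneg (hf0 x)]
  have hfint : Integrable f μ := (integrable_const C).mono' hfmeas hfC'
  have hfgint : Integrable (f * g) μ := hgint.bdd_mul hfmeas hfC'
  have hpull : μ[f * g | m] =ᵐ[μ] f * μ[g | m] :=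
    condExp_mul_of_stronglyMeasurable_left hf hfgint hgint
  have h1 : ∫ x, f x * g x ∂μ = ∫ x, f x * (μ[g | m]) x ∂μ := by
    calc ∫ x, f x * g x ∂μ = ∫ x, (μ[f * g | m]) x ∂μ := (integral_condExp hm).symm
    _ = ∫ x, f x * (μ[g|m]) x ∂μ := integral_congr_ae hpull
  rw [h1, ← integral_const_mul]
  have hint2 : Integrable (fun x => f x * (μ[g|m]) x) μ := integrable_condExp.congr hpull
  refine integral_mono_ae (hfint.const_mul p) hint2 ?_
  filter_upwards [hfp] with x hx
  rcases (hf0 x).eq_or_lt with h | h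
  · simp [← h]
  · have := hx h
    calc p * f x = f x * p := by ring
    _ ≤ f x * (μ[g|m]) x := mul_le_mul_of_nonneg_left this (hf0 x)


/-- The key logarithmic estimate. -/
lemma stmt11_log (γ p q w β : ℝ) (n : ℕ) (hγ0 : 0 < γ) (hγ1 : γ < 1)
    (hp : 1/2 < p) (hp1 : p < 1) (hq : q = 1 - p) (hn : 2 ≤ n) (hw : 0 < w)
    (hβ0 : 0 < β) (hβ : β < 1/2) (hγhalf : 1/2 ≤ γ)
    (hγbig2 : (1/(2*q)) ^ (Real.log (2*β) / ((1 + w) * Real.log n)) ≤ γ) :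
    β ^ (Real.log (p/q) / (-Real.log γ)) ≤ (q/p) * (n:ℝ) ^ (-(1+w)) := by
  have hq0 : 0 < q := by rw [hq]; linarith
  have hqp : q < p := by rw [hq]; linarith
  have hp0 : 0 < p := by linarith
  have hψ1 : 1 < p/q := (one_lt_div hq0).2 hqp
  have hn1 : (1:ℝ) < n := by
    have : (2:ℝ) ≤ n := by exact_mod_cast hn
    linarith
  have hn0 : (0:ℝ) < n := by linarith
  have hlogγ : Real.log γ < 0 := Real.log_neg hγ0 hγ1
  have hlogn : 0 < Real.log n := Real.log_pos hn1
  set a : ℝ := -Real.log γ with hadef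
  have ha0 : 0 < a := by rw [hadef]; linarith
  have haln2 : a ≤ Real.log 2 := by
    have h1 : Real.log (1/2) ≤ Real.log γ := Real.log_le_log (by norm_num) hγhalf
    rw [one_div, Real.log_inv] at h1
    rw [hadef]; linarith
  set b : ℝ := -Real.log (2*β) with hbdef
  have hb0 : 0 < b := by
    have := Real.log_neg (by linarith) (by linarith : 2*β < 1)
    rw [hbdef]; linarith
  set L : ℝ := (1+w) * Real.log n with hLdef
  have hL0 : 0 < L := mul_pos (by linarith) hlogn
  set d : ℝ := Real.log (1/(2*q)) with hddef
  have h2q1 : 2*q < 1 := by rw [hq]; linarith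
  have hd0 : 0 < d := by
    rw [hddef]
    apply Real.log_pos
    rw [lt_div_iff₀ (by linarith)]; linarith
  set d0 : ℝ := Real.log (p/q) with hd0def
  have hd00 : 0 < d0 := by rw [hd0def]; exact Real.log_pos hψ1
  have hdd0 : d ≤ d0 := by
    have hx : 1/(2*q) ≤ p/q := by
      have h2 : 1/(2*q) = (1/(2:ℝ)) * (1/q) := by ring
      have h3 : p/q = p * (1/q) := by ring
      rw [h2, h3]
      exact mul_le_mul_of_nonneg_right (by linarith) (one_div_nonneg.2 hq0.le)
    rw [hddef, hd0def]
    exact Real.log_le_log (by positivity) hx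
  have h2q0 : (0:ℝ) < 1/(2*q) := by positivity
  have h3 : (Real.log (2*β) / L) * d ≤ Real.log γ := by
    have := Real.log_le_log (Real.rpow_pos_of_pos h2q0 _) hγbig2
    rwa [Real.log_rpow h2q0, ← hddef] at this
  have haL : a * L ≤ b * d := by
    have h4 : Real.log (2*β) = -b := by rw [hbdef]; ring
    rw [h4] at h3
    have h5 : (-b / L) * d = (-(b*d)) / L := by ring
    rw [h5] at h3
    have h6 := (div_le_iff₀ hL0).1 (h3.trans (by rw [hadef]; linarith : Real.log γ ≤ -a))
    linarith
  have hlogβ : Real.log β = -b - Real.log 2 := by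
    have h7 : Real.log (2*β) = Real.log 2 + Real.log β :=
      Real.log_mul two_ne_zero hβ0.ne'
    have h8 : Real.log (2*β) = -b := by rw [hbdef]; ring
    linarith [h7.symm.trans h8]
  have hsβ : Real.log β * (d0 / a) ≤ Real.log (q/p) + Real.log n * (-(1+w)) := by
    have hlogqp : Real.log (q/p) = -d0 := by
      rw [← inv_div p q, Real.log_inv, hd0def]
    rw [hlogqp, hlogβ]
    have hgoal : (-b - Real.log 2) * (d0 / a) ≤ -d0 - L := by
      rw [mul_div_assoc', div_le_iff₀ ha0]
      have hf1 : a * L ≤ b * d0 := haL.trans (mul_le_mul_of_nonneg_left hdd0 hb0.le)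
      have hf2 : a * d0 ≤ Real.log 2 * d0 := mul_le_mul_of_nonneg_right haln2 hd00.le
      nlinarith [hf1, hf2]
    calc (-b - Real.log 2) * (d0 / a) ≤ -d0 - L := hgoal
    _ = -d0 + Real.log n * (-(1+w)) := by rw [hLdef]; ring
  have hfin : Real.log β * (Real.log (p/q) / (-Real.log γ))
      ≤ Real.log (q/p) + Real.log n * (-(1+w)) := by
    have : Real.log (p/q) / (-Real.log γ) = d0 / a := by rw [hd0def, hadef]
    rw [this]; exact hsβ
  calc β ^ (Real.log (p/q) / (-Real.log γ))
      = Real.exp (Real.log β * (Real.log (p/q) / (-Real.log γ))) :=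
        Real.rpow_def_of_pos hβ0 _
  _ ≤ Real.exp (Real.log (q/p) + Real.log n * (-(1+w))) := Real.exp_le_exp.2 hfin
  _ = Real.exp (Real.log (q/p)) * Real.exp (Real.log n * (-(1+w))) := Real.exp_add _ _
  _ = (q/p) * (n:ℝ) ^ (-(1+w)) := by
      rw [Real.exp_log (by positivity), ← Real.rpow_def_of_pos hn0]

/-- Comparison of `q/p` with the constant `c`. -/
lemma stmt11_c (p q : ℝ) (hp : 1/2 < p) (hp1 : p < 1) (hq : q = 1 - p) :
    q/p ≤ 2 * Real.sqrt (p*q) / (1 - 2 * Real.sqrt (p*q))^2 := by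
  have hq0 : 0 < q := by rw [hq]; linarith
  have hqp : q < p := by rw [hq]; linarith
  have hp0 : 0 < p := by linarith
  set r : ℝ := Real.sqrt (p*q) with hrdef
  have hr0 : 0 ≤ r := Real.sqrt_nonneg _
  have hrq : q ≤ r := by
    rw [hrdef]
    calc q = Real.sqrt (q*q) := (Real.sqrt_mul_self hq0.le).symm
    _ ≤ Real.sqrt (p*q) := Real.sqrt_le_sqrt (mul_le_mul_of_nonneg_right hqp.le hq0.le)
  have hpq4 : p*q < 1/4 := by
    have h4 : 0 < (p-q)*(p-q) := mul_pos (by linarith) (by linarith)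
    have h5 : 4*(p*q) = (p+q)*(p+q) - (p-q)*(p-q) := by ring
    have h6 : p + q = 1 := by rw [hq]; ring
    rw [h6] at h5
    linarith
  have hrhalf : r < 1/2 := by
    rw [hrdef]
    refine (Real.sqrt_lt' (by norm_num)).2 ?_
    rw [show ((1:ℝ)/2)^2 = 1/4 by norm_num]
    exact hpq4
  have hden : (0:ℝ) < (1 - 2*r)^2 := by
    have h7 : (0:ℝ) < 1 - 2*r := by linarith
    positivity
  have hden1 : (1 - 2*r)^2 ≤ 1 := by
    have h8 : (0:ℝ) ≤ r * (1 - r) := mul_nonneg hr0 (by linarith)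
    have h9 : (1-2*r)^2 = 1 - 4*(r*(1-r)) := by ring
    linarith
  have h1 : q/p ≤ 2*q := by
    rw [div_le_iff₀ hp0]
    have h10 : (0:ℝ) ≤ q*(2*p-1) := mul_nonneg hq0.le (by linarith)
    linarith
  have h2 : 2*q ≤ 2*r := by linarith
  have h3 : 2*r ≤ 2*r / (1 - 2*r)^2 := by
    rw [le_div_iff₀ hden]
    have h11 := mul_le_mul_of_nonneg_left hden1 (by linarith : (0:ℝ) ≤ 2*r)
    linarith
  linarith

set_option maxHeartbeats 4000000 in
/-- If `γ ≥ max{1/2, (1/(2q))^{log(2β)/((1+ω) log n)}}` with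
`0 < β < 1/2`, then with probability at least `1 − μ(T > n) − n^{−ω} − c·n^{−(1+ω)}`,
we have `T ≤ n` and `TOC(T) ≤ n·oc(β·ᾱ)`. -/
theorem stmt_11
    {Ω : Type*} [mΩ : MeasurableSpace Ω] (μ : Measure Ω) [IsProbabilityMeasure μ]
    (F : Filtration ℕ mΩ)
    (γ ᾱ p q : ℝ) (hγ0 : 0 < γ) (hγ1 : γ < 1) (hᾱ : 0 < ᾱ)
    (hp : 1/2 < p) (hp1 : p < 1) (hq : q = 1 - p)
    (αmax : ℝ) (j' : ℤ) (hj' : j' ≤ 0) (hαmax : αmax = ᾱ * γ ^ j')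
    (A : ℕ → Ω → ℝ) (hadp : Adapted F A) (hpos : ∀ k x, 0 < A k x)
    (T : Ω → ℕ) (hT : IsStoppingTime F (fun x => (T x : WithTop ℕ)))
    (j : ℤ) (hj : j ≤ 0) (hA0 : ∀ x, A 0 x = ᾱ * γ ^ j)
    (hstep : ∀ k, ∀ᵐ x ∂μ,
      A (k+1) x = γ * A k x ∨ A (k+1) x = min αmax (γ⁻¹ * A k x))
    (hcond : ∀ k, ∀ᵐ x ∂μ, (k < T x ∧ A k x ≤ ᾱ) →
      p ≤ (μ[Set.indicator {x' | A (k+1) x' = min αmax (γ⁻¹ * A k x')}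
              (fun _ => (1:ℝ)) | F k]) x)
    (oc : ℝ → ℝ) (hoc0 : ∀ a, 0 < a → 0 ≤ oc a)
    (hocmono : ∀ a b, 0 < a → a ≤ b → oc b ≤ oc a)
    (n : ℕ) (hn : 2 ≤ n) (w : ℝ) (hw : 0 < w) (β : ℝ) (hβ0 : 0 < β) (hβ : β < 1/2)
    (hγbig : max (1/2) ((1/(2*q)) ^ (Real.log (2*β) / ((1 + w) * Real.log n))) ≤ γ) :
    ENNReal.ofReal (1 - (μ {x | n < T x}).toReal - (n : ℝ) ^ (-w)
        - (2 * Real.sqrt (p*q) / (1 - 2 * Real.sqrt (p*q))^2) * (n : ℝ) ^ (-(1 + w))) ≤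
      μ {x | T x ≤ n ∧
        ∑ k ∈ Finset.Icc 1 (T x), oc (A k x) ≤ (n : ℝ) * oc (β * ᾱ)} := by
  classical
  -- ## basic numeric facts
  have hq0 : 0 < q := by rw [hq]; linarith
  have hqp : q < p := by rw [hq]; linarith
  have hp0 : 0 < p := by linarith
  have hγhalf : (1/2 : ℝ) ≤ γ := le_trans (le_max_left _ _) hγbig
  have hn1 : (1:ℝ) < n := by
    have : (2:ℝ) ≤ n := by exact_mod_cast hn
    linarith
  have hn0 : (0:ℝ) < n := by linarith
  set ψ : ℝ := p / q with hψdef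
  have hψ1 : 1 < ψ := (one_lt_div hq0).2 hqp
  have hψ0 : 0 < ψ := by linarith
  have hlogγ : Real.log γ < 0 := Real.log_neg hγ0 hγ1
  set s : ℝ := Real.log ψ / (-Real.log γ) with hsdef
  have hs0 : 0 < s := div_pos (Real.log_pos hψ1) (by linarith)
  have hγs : γ ^ s = q / p := by
    rw [Real.rpow_def_of_pos hγ0]
    have hne : -Real.log γ ≠ 0 := by linarith
    have h1 : Real.log γ * s = -Real.log ψ := by
      rw [hsdef]; field_simp; rw [mul_comm (Real.log γ), mul_div_cancel_right₀ _ hlogγ.ne]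
    rw [h1, Real.exp_neg, Real.exp_log hψ0, hψdef, inv_div]
  have hγinv1 : (1:ℝ) ≤ γ⁻¹ := by
    rw [le_inv_comm₀ one_pos hγ0]; linarith
  have hγinvs : (γ⁻¹ : ℝ) ^ s = ψ := by
    rw [Real.inv_rpow hγ0.le, hγs, inv_div]
  -- ## the process V
  set V : ℕ → Ω → ℝ := fun k x => (ᾱ / A k x) ^ s with hVdef
  have hV0 : ∀ k x, 0 < V k x := fun k x =>
    Real.rpow_pos_of_pos (div_pos hᾱ (hpos k x)) s
  have hVdn : ∀ k x, A (k+1) x = γ * A k x → V (k+1) x = ψ * V k x := by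
    intro k x hx
    have h1 : ᾱ / A (k+1) x = γ⁻¹ * (ᾱ / A k x) := by
      rw [hx]; field_simp
    rw [hVdef]; simp only
    rw [h1, Real.mul_rpow (inv_nonneg.2 hγ0.le) (div_nonneg hᾱ.le (hpos k x).le), hγinvs]
  have hVup : ∀ k x, A (k+1) x = γ⁻¹ * A k x → V (k+1) x = (q/p) * V k x := by
    intro k x hx
    have h1 : ᾱ / A (k+1) x = γ * (ᾱ / A k x) := by
      rw [hx]; field_simp
    rw [hVdef]; simp only
    rw [h1, Real.mul_rpow hγ0.le (div_nonneg hᾱ.le (hpos k x).le), hγs]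
  have hVmono : ∀ k l x, 0 < A k x → A k x ≤ A l x → V l x ≤ V k x := by
    intro k l x h1 h2
    rw [hVdef]; simp only
    have h3 : ᾱ / A l x ≤ ᾱ / A k x := by
      apply div_le_div_of_nonneg_left hᾱ.le h1 h2
    exact Real.rpow_le_rpow (div_nonneg hᾱ.le (hpos l x).le) h3 hs0.le
  have hVle1 : ∀ k x, ᾱ ≤ A k x → V k x ≤ 1 := by
    intro k x h
    apply Real.rpow_le_one (div_nonneg hᾱ.le (hpos k x).le) _ hs0.le
    rw [div_le_one (hpos k x)]; exact h
  have hzpow : ∀ m : ℤ, m ≤ 0 → (1:ℝ) ≤ γ ^ m := by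
    intro m hm
    have h1 : γ ^ m = (γ⁻¹) ^ (-m) := by
      rw [inv_zpow, ← zpow_neg, neg_neg]
    rw [h1]
    apply one_le_zpow₀ hγinv1 (by omega)
  have hᾱαmax : ᾱ ≤ αmax := by
    rw [hαmax]
    nth_rewrite 1 [← mul_one ᾱ]
    exact mul_le_mul_of_nonneg_left (hzpow j' hj') hᾱ.le
  have hγj : (1:ℝ) ≤ γ ^ j := hzpow j hj
  -- ## almost-sure lower bound for A, upper bound for V
  have hstep' : ∀ᵐ x ∂μ, ∀ k,
      A (k+1) x = γ * A k x ∨ A (k+1) x = min αmax (γ⁻¹ * A k x) := ae_all_iff.2 hstep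
  have hlow : ∀ᵐ x ∂μ, ∀ k, γ ^ k * ᾱ ≤ A k x := by
    filter_upwards [hstep'] with x hx
    intro k
    induction k with
    | zero =>
      rw [pow_zero, one_mul, hA0 x]
      nth_rewrite 1 [← mul_one ᾱ]
      exact mul_le_mul_of_nonneg_left hγj hᾱ.le
    | succ k ih =>
      have hγk1 : γ ^ (k+1) ≤ γ ^ k := by
        apply pow_le_pow_of_le_one hγ0.le hγ1.le; omega
      rcases hx k with h | h
      · rw [h, pow_succ]
        calc γ ^ k * γ * ᾱ = γ * (γ ^ k * ᾱ) := by ring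
        _ ≤ γ * A k x := by
          apply mul_le_mul_of_nonneg_left ih hγ0.le
      · rw [h]
        apply le_min
        · have h1 : γ ^ (k+1) * ᾱ ≤ 1 * ᾱ :=
            mul_le_mul_of_nonneg_right (pow_le_one₀ hγ0.le hγ1.le) hᾱ.le
          rw [one_mul] at h1
          linarith
        · have h2 : A k x ≤ γ⁻¹ * A k x := by
            nth_rewrite 1 [← one_mul (A k x)]
            exact mul_le_mul_of_nonneg_right hγinv1 (hpos k x).le
          calc γ ^ (k+1) * ᾱ ≤ γ ^ k * ᾱ :=
              mul_le_mul_of_nonneg_right hγk1 hᾱ.le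
          _ ≤ A k x := ih
          _ ≤ γ⁻¹ * A k x := h2
  have hVb : ∀ᵐ x ∂μ, ∀ m, V m x ≤ ψ ^ m := by
    filter_upwards [hlow] with x hx
    intro m
    have hγm : (0:ℝ) < γ ^ m := pow_pos hγ0 m
    have h1 : ᾱ / A m x ≤ (γ⁻¹) ^ m := by
      rw [div_le_iff₀ (hpos m x)]
      have h2 : (γ⁻¹)^m * (γ ^ m * ᾱ) ≤ (γ⁻¹)^m * A m x :=
        mul_le_mul_of_nonneg_left (hx m) (by positivity)
      have h3 : (γ⁻¹)^m * (γ ^ m * ᾱ) = ᾱ := by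
        rw [← mul_assoc, inv_pow, inv_mul_cancel₀ hγm.ne', one_mul]
      linarith
    have h4 : V m x ≤ ((γ⁻¹) ^ m) ^ s :=
      Real.rpow_le_rpow (div_nonneg hᾱ.le (hpos m x).le) h1 hs0.le
    have h5 : (((γ⁻¹) ^ m : ℝ)) ^ s = ψ ^ m := by
      rw [← Real.rpow_natCast γ⁻¹ m, ← Real.rpow_mul (by positivity),
        mul_comm, Real.rpow_mul (by positivity), hγinvs, Real.rpow_natCast]
    linarith
  -- ## stopping time σ and stopped process W
  set D : Ω → Set ℕ := fun x => {k | n ≤ k ∨ A k x ≤ β * ᾱ} with hDdef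
  have hDne : ∀ x, n ∈ D x := fun x => Or.inl le_rfl
  set σ : Ω → ℕ := fun x => min (T x) (sInf (D x)) with hσdef
  have hσn : ∀ x, σ x ≤ n := fun x =>
    le_trans (min_le_right _ _) (Nat.sInf_le (hDne x))
  have hσT : ∀ x, σ x ≤ T x := fun x => min_le_left _ _
  set W : ℕ → Ω → ℝ := fun k x => V (min k (σ x)) x with hWdef
  -- ## measurability
  have hAm : ∀ k, Measurable (A k) := fun k => (hadp k).mono (F.le k) le_rfl
  have hVmF : ∀ k, Measurable[F k] (V k) := fun k =>
    (Real.continuous_rpow_const hs0.le).measurable.comp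
      (measurable_const.div (hadp k))
  have hVm : ∀ k, Measurable (V k) := fun k =>
    (Real.continuous_rpow_const hs0.le).measurable.comp
      (measurable_const.div (hAm k))
  have hDm : ∀ i, MeasurableSet {x | i ∈ D x} := by
    intro i
    by_cases hi : n ≤ i
    · have : {x | i ∈ D x} = Set.univ := by
        ext x; simp [hDdef, hi]
      rw [this]; exact MeasurableSet.univ
    · have : {x | i ∈ D x} = {x | A i x ≤ β * ᾱ} := by
        ext x; simp [hDdef, hi]
      rw [this]; exact hAm i measurableSet_Iic
  have hDmF : ∀ i k, i ≤ k → MeasurableSet[F k] {x | i ∈ D x} := by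
    intro i k hik
    by_cases hi : n ≤ i
    · have : {x | i ∈ D x} = Set.univ := by
        ext x; simp [hDdef, hi]
      rw [this]; exact MeasurableSet.univ
    · have : {x | i ∈ D x} = {x | A i x ≤ β * ᾱ} := by
        ext x; simp [hDdef, hi]
      rw [this]
      exact F.mono hik _ ((hadp i) measurableSet_Iic)
  have hTm : Measurable T := by
    apply measurable_to_countable'
    intro i
    have : T ⁻¹' {i} = {x | T x = i} := rfl
    rw [this]
    exact F.le i _ (by simpa using hT.measurableSet_eq i)
  have hsInfDm : Measurable fun x => sInf (D x) := by
    apply measurable_to_countable'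
    intro i
    have heq : (fun x => sInf (D x)) ⁻¹' {i}
        = {x | i ∈ D x} ∩ ⋂ (j : ℕ) (_ : j < i), {x | j ∈ D x}ᶜ := by
      ext x
      simp only [Set.mem_preimage, Set.mem_singleton_iff, Set.mem_inter_iff,
        Set.mem_iInter, Set.mem_compl_iff, Set.mem_setOf_eq]
      constructor
      · intro h
        refine ⟨h ▸ Nat.sInf_mem ⟨n, hDne x⟩, fun j hj hjD => ?_⟩
        exact absurd (Nat.sInf_le hjD) (by omega)
      · rintro ⟨h1, h2⟩
        have hle : sInf (D x) ≤ i := Nat.sInf_le h1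
        rcases lt_or_eq_of_le hle with h | h
        · exact absurd (Nat.sInf_mem ⟨n, hDne x⟩) (h2 _ h)
        · exact h
    rw [heq]
    exact (hDm i).inter (MeasurableSet.iInter fun j =>
      MeasurableSet.iInter fun _ => (hDm j).compl)
  have hσm : Measurable σ := hTm.min hsInfDm
  have hWm : ∀ k, Measurable (W k) := by
    intro k
    have h1 : Measurable fun x => (x, min k (σ x)) :=
      measurable_id.prodMk (measurable_const.min hσm)
    exact (measurable_from_prod_countable_left (f := fun p : Ω × ℕ => V p.2 p.1) fun i => hVm i).comp h1
  have hσleF : ∀ k, MeasurableSet[F k] {x | σ x ≤ k} := by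
    intro k
    have heq : {x | σ x ≤ k}
        = {x | T x ≤ k} ∪ ⋃ (i : ℕ) (_ : i ≤ k), {x | i ∈ D x} := by
      ext x
      simp only [Set.mem_setOf_eq, Set.mem_union, Set.mem_iUnion, hσdef, min_le_iff]
      constructor
      · rintro (h | h)
        · exact Or.inl h
        · exact Or.inr ⟨sInf (D x), h, Nat.sInf_mem ⟨n, hDne x⟩⟩
      · rintro (h | ⟨i, hik, hiD⟩)
        · exact Or.inl h
        · exact Or.inr (le_trans (Nat.sInf_le hiD) hik)
    rw [heq]
    exact (show MeasurableSet[F k] {x | T x ≤ k} by simpa using hT k).union (MeasurableSet.iUnion fun i =>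
      MeasurableSet.iUnion fun hik => hDmF i k hik)
  -- ## nonnegativity, boundedness, integrability of W
  have hW0 : ∀ k x, 0 ≤ W k x := fun k x => (hV0 _ _).le
  have hWb : ∀ k, ∀ᵐ x ∂μ, W k x ≤ ψ ^ n := by
    intro k
    filter_upwards [hVb] with x hx
    calc W k x ≤ ψ ^ (min k (σ x)) := hx _
    _ ≤ ψ ^ n := by
        apply pow_le_pow_right₀ hψ1.le
        exact le_trans (min_le_right _ _) (hσn x)
  have hbint : ∀ (f : Ω → ℝ), AEStronglyMeasurable f μ → ∀ (C : ℝ),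
      (∀ᵐ x ∂μ, |f x| ≤ C) → Integrable f μ := by
    intro f hf C hC
    exact (integrable_const C).mono' hf (by simpa [Real.norm_eq_abs] using hC)
  have hWint : ∀ k, Integrable (W k) μ := by
    intro k
    apply hbint _ (hWm k).aestronglyMeasurable (ψ ^ n)
    filter_upwards [hWb k] with x hx
    rw [abs_of_nonneg (hW0 k x)]; exact hx
  -- ## main recursion
  have hVle' : ∀ k x, γ * ᾱ ≤ A k x → V k x ≤ ψ := by
    intro k x h
    have h2 : ᾱ / A k x ≤ γ⁻¹ := by
      rw [div_le_iff₀ (hpos k x)]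
      have h3 := mul_le_mul_of_nonneg_left h (inv_nonneg.2 hγ0.le)
      rw [← mul_assoc, inv_mul_cancel₀ hγ0.ne', one_mul] at h3
      linarith only [h3]
    calc V k x ≤ (γ⁻¹) ^ s := by
          rw [hVdef]; simp only
          exact Real.rpow_le_rpow (div_nonneg hᾱ.le (hpos k x).le) h2 hs0.le
    _ = ψ := hγinvs
  have hqp1 : 0 < q/p := by positivity
  have hqpψ : q/p ≤ ψ := by
    have h1 : q/p ≤ 1 := (div_le_one hp0).2 hqp.le
    linarith only [h1, hψ1]
  have hrec : ∀ k, ∫ x, W (k+1) x ∂μ ≤ (∫ x, W k x ∂μ) + ψ := by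
    intro k
    set U : Set Ω := {x' | A (k+1) x' = min αmax (γ⁻¹ * A k x')} with hUdef
    have hUm : MeasurableSet U :=
      measurableSet_eq_fun (hAm (k+1)) (measurable_const.min ((hAm k).const_mul γ⁻¹))
    set UI : Ω → ℝ := Set.indicator U (fun _ => (1:ℝ)) with hUIdef
    have hUIm : Measurable UI := measurable_const.indicator hUm
    have hUI0 : ∀ x, 0 ≤ UI x := fun x => Set.indicator_nonneg (fun _ _ => zero_le_one) x
    have hUI1 : ∀ x, UI x ≤ 1 := by
      intro x
      rw [hUIdef]
      by_cases hx : x ∈ U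
      · rw [Set.indicator_of_mem hx]
      · rw [Set.indicator_of_notMem hx]; exact zero_le_one
    set S0 : Set Ω := {x | σ x ≤ k} with hS0def
    set S1 : Set Ω := {x | k < σ x ∧ A k x ≤ min (γ*αmax) ᾱ} with hS1def
    set S2 : Set Ω := {x | k < σ x ∧ ¬ A k x ≤ min (γ*αmax) ᾱ ∧ A k x ≤ ᾱ} with hS2def
    set S3 : Set Ω := {x | k < σ x ∧ ¬ A k x ≤ ᾱ} with hS3def
    have hS1sub : ∀ x, x ∈ S1 → k < σ x ∧ A k x ≤ min (γ*αmax) ᾱ := fun x hx => hx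
    have hS2sub : ∀ x, x ∈ S2 → k < σ x ∧ ¬ A k x ≤ min (γ*αmax) ᾱ ∧ A k x ≤ ᾱ :=
      fun x hx => hx
    have hS3sub : ∀ x, x ∈ S3 → k < σ x ∧ ¬ A k x ≤ ᾱ := fun x hx => hx
    have hS0F : MeasurableSet[F k] S0 := hσleF k
    have hltF : MeasurableSet[F k] {x | k < σ x} := by
      have he : {x | k < σ x} = S0ᶜ := by
        rw [hS0def]; ext x; simp [not_le]
      rw [he]; exact hS0F.compl
    have hA1F : MeasurableSet[F k] {x | A k x ≤ min (γ*αmax) ᾱ} :=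
      (hadp k) measurableSet_Iic
    have hA2F : MeasurableSet[F k] {x | A k x ≤ ᾱ} :=
      (hadp k) measurableSet_Iic
    have hS1F : MeasurableSet[F k] S1 := hltF.inter hA1F
    have hS2F : MeasurableSet[F k] S2 := hltF.inter (hA1F.compl.inter hA2F)
    have hS3F : MeasurableSet[F k] S3 := hltF.inter hA2F.compl
    have hS0m : MeasurableSet S0 := F.le k _ hS0F
    have hS1m : MeasurableSet S1 := F.le k _ hS1F
    have hS2m : MeasurableSet S2 := F.le k _ hS2F
    have hS3m : MeasurableSet S3 := F.le k _ hS3F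
    set f1 : Ω → ℝ := S1.indicator (V k) with hf1def
    set f2 : Ω → ℝ := S2.indicator (V k) with hf2def
    have hf10 : ∀ x, 0 ≤ f1 x := fun x => Set.indicator_nonneg (fun y _ => (hV0 k y).le) x
    have hf20 : ∀ x, 0 ≤ f2 x := fun x => Set.indicator_nonneg (fun y _ => (hV0 k y).le) x
    have hψk0 : (0:ℝ) < ψ ^ k := pow_pos hψ0 k
    have hf1b : ∀ᵐ x ∂μ, f1 x ≤ ψ ^ k := by
      filter_upwards [hVb] with x hx
      rw [hf1def]
      by_cases hmem : x ∈ S1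
      · rw [Set.indicator_of_mem hmem]; exact hx k
      · rw [Set.indicator_of_notMem hmem]; exact hψk0.le
    have hf2b : ∀ᵐ x ∂μ, f2 x ≤ ψ ^ k := by
      filter_upwards [hVb] with x hx
      rw [hf2def]
      by_cases hmem : x ∈ S2
      · rw [Set.indicator_of_mem hmem]; exact hx k
      · rw [Set.indicator_of_notMem hmem]; exact hψk0.le
    have hbint2 : ∀ (f : Ω → ℝ), Measurable f → (∀ x, 0 ≤ f x) →
        (∀ᵐ x ∂μ, f x ≤ ψ ^ k) → Integrable f μ := by
      intro f hfm hf0 hfb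
      apply hbint _ hfm.aestronglyMeasurable (ψ^k)
      filter_upwards [hfb] with x hx
      rw [abs_of_nonneg (hf0 x)]; exact hx
    have hf1int : Integrable f1 μ := hbint2 f1 ((hVm k).indicator hS1m) hf10 hf1b
    have hf2int : Integrable f2 μ := hbint2 f2 ((hVm k).indicator hS2m) hf20 hf2b
    have hf1UIint : Integrable (fun x => f1 x * UI x) μ := by
      apply hbint2 _ (((hVm k).indicator hS1m).mul hUIm)
        (fun x => mul_nonneg (hf10 x) (hUI0 x))
      filter_upwards [hf1b] with x hx
      calc f1 x * UI x ≤ f1 x * 1 := mul_le_mul_of_nonneg_left (hUI1 x) (hf10 x)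
      _ = f1 x := mul_one _
      _ ≤ ψ ^ k := hx
    have hf2UIint : Integrable (fun x => f2 x * UI x) μ := by
      apply hbint2 _ (((hVm k).indicator hS2m).mul hUIm)
        (fun x => mul_nonneg (hf20 x) (hUI0 x))
      filter_upwards [hf2b] with x hx
      calc f2 x * UI x ≤ f2 x * 1 := mul_le_mul_of_nonneg_left (hUI1 x) (hf20 x)
      _ = f2 x := mul_one _
      _ ≤ ψ ^ k := hx
    have hcnd := hcond k
    rw [← hUdef] at hcnd
    have hcore1 : p * ∫ x, f1 x ∂μ ≤ ∫ x, f1 x * UI x ∂μ := by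
      refine stmt11_pull μ (F.le k) hUm
        (((hVmF k).indicator hS1F).stronglyMeasurable) hf10 hf1b ?_
      filter_upwards [hcnd] with x hx hposx
      have hmem : x ∈ S1 := Set.mem_of_indicator_ne_zero (ne_of_gt hposx)
      obtain ⟨h1, h2⟩ := hS1sub x hmem
      exact hx ⟨lt_of_lt_of_le h1 (hσT x), le_trans h2 (min_le_right _ _)⟩
    have hcore2 : p * ∫ x, f2 x ∂μ ≤ ∫ x, f2 x * UI x ∂μ := by
      refine stmt11_pull μ (F.le k) hUm
        (((hVmF k).indicator hS2F).stronglyMeasurable) hf20 hf2b ?_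
      filter_upwards [hcnd] with x hx hposx
      have hmem : x ∈ S2 := Set.mem_of_indicator_ne_zero (ne_of_gt hposx)
      obtain ⟨h1, h2, h3⟩ := hS2sub x hmem
      exact hx ⟨lt_of_lt_of_le h1 (hσT x), h3⟩
    set g0 : Ω → ℝ := S0.indicator (W k) with hg0def
    set g1 : Ω → ℝ := S1.indicator (fun x => V k x * (ψ - (ψ - q/p) * UI x)) with hg1def
    set g2 : Ω → ℝ := S2.indicator (fun x => V k x * (ψ - (ψ - 1) * UI x)) with hg2def
    set g3 : Ω → ℝ := S3.indicator (fun _ => ψ) with hg3def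
    have hUeq : ∀ x, x ∈ U → A (k+1) x = min αmax (γ⁻¹ * A k x) := by
      intro x hx; rw [hUdef] at hx; exact hx
    have hAinc : ∀ x, A k x ≤ γ⁻¹ * A k x := by
      intro x
      nth_rewrite 1 [← one_mul (A k x)]
      exact mul_le_mul_of_nonneg_right hγinv1 (hpos k x).le
    have hmain : ∀ᵐ x ∂μ, W (k+1) x ≤ g0 x + g1 x + g2 x + g3 x := by
      filter_upwards [hstep k] with x hx
      by_cases h0 : σ x ≤ k
      · have hnlt : ¬ k < σ x := not_lt.2 h0
        have e0 : W (k+1) x = W k x := by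
          rw [hWdef]; simp only
          rw [min_eq_right (le_trans h0 (Nat.le_succ k)), min_eq_right h0]
        have v0 : g0 x = W k x := Set.indicator_of_mem (show x ∈ S0 from h0) _
        have v1 : g1 x = 0 := Set.indicator_of_notMem (fun hc => hnlt (hS1sub x hc).1) _
        have v2 : g2 x = 0 := Set.indicator_of_notMem (fun hc => hnlt (hS2sub x hc).1) _
        have v3 : g3 x = 0 := Set.indicator_of_notMem (fun hc => hnlt (hS3sub x hc).1) _
        rw [e0, v0, v1, v2, v3]
        linarith only []
      · have hk : k < σ x := not_le.1 h0
        have v0 : g0 x = 0 := Set.indicator_of_notMem (show x ∉ S0 from h0) _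
        have eW1 : W (k+1) x = V (k+1) x := by
          rw [hWdef]; simp only
          rw [min_eq_left (by omega : k+1 ≤ σ x)]
        have hdown : x ∉ U → A (k+1) x = γ * A k x := by
          intro hU
          rcases hx with h | h
          · exact h
          · exact absurd (show x ∈ U from h) hU
        by_cases h1 : A k x ≤ min (γ*αmax) ᾱ
        · have hm1 : x ∈ S1 := ⟨hk, h1⟩
          have v1 : g1 x = V k x * (ψ - (ψ - q/p) * UI x) := Set.indicator_of_mem hm1 _
          have v2 : g2 x = 0 := Set.indicator_of_notMem (fun hc => (hS2sub x hc).2.1 h1) _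
          have v3 : g3 x = 0 := Set.indicator_of_notMem
            (fun hc => (hS3sub x hc).2 (le_trans h1 (min_le_right _ _))) _
          rw [eW1, v0, v1, v2, v3]
          by_cases hU : x ∈ U
          · have hui : UI x = 1 := Set.indicator_of_mem hU _
            have hle : γ⁻¹ * A k x ≤ αmax := by
              rw [inv_mul_le_iff₀ hγ0]
              exact le_trans h1 (min_le_left _ _)
            have hA1 : A (k+1) x = γ⁻¹ * A k x := by
              rw [hUeq x hU]; exact min_eq_right hle
            rw [hVup k x hA1, hui]
            have hid : V k x * (ψ - (ψ - q/p) * 1) = q/p * V k x := by ring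
            linarith only [hid]
          · have hui : UI x = 0 := Set.indicator_of_notMem hU _
            rw [hVdn k x (hdown hU), hui]
            have hid : V k x * (ψ - (ψ - q/p) * 0) = ψ * V k x := by ring
            linarith only [hid]
        · by_cases h2 : A k x ≤ ᾱ
          · have hm2 : x ∈ S2 := ⟨hk, h1, h2⟩
            have v1 : g1 x = 0 := Set.indicator_of_notMem (fun hc => h1 (hS1sub x hc).2) _
            have v2 : g2 x = V k x * (ψ - (ψ - 1) * UI x) := Set.indicator_of_mem hm2 _
            have v3 : g3 x = 0 := Set.indicator_of_notMem (fun hc => (hS3sub x hc).2 h2) _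
            rw [eW1, v0, v1, v2, v3]
            by_cases hU : x ∈ U
            · have hui : UI x = 1 := Set.indicator_of_mem hU _
              have hge : A k x ≤ A (k+1) x := by
                rw [hUeq x hU]
                exact le_min (le_trans h2 hᾱαmax) (hAinc x)
              have hVle2 := hVmono k (k+1) x (hpos k x) hge
              rw [hui]
              have hid : V k x * (ψ - (ψ - 1) * 1) = V k x := by ring
              linarith only [hid, hVle2]
            · have hui : UI x = 0 := Set.indicator_of_notMem hU _
              rw [hVdn k x (hdown hU), hui]
              have hid : V k x * (ψ - (ψ - 1) * 0) = ψ * V k x := by ring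
              linarith only [hid]
          · have hm3 : x ∈ S3 := ⟨hk, h2⟩
            have v1 : g1 x = 0 := Set.indicator_of_notMem
              (fun hc => h1 (hS1sub x hc).2) _
            have v2 : g2 x = 0 := Set.indicator_of_notMem
              (fun hc => h2 (hS2sub x hc).2.2) _
            have v3 : g3 x = ψ := Set.indicator_of_mem hm3 _
            rw [eW1, v0, v1, v2, v3]
            by_cases hU : x ∈ U
            · have hge : ᾱ ≤ A (k+1) x := by
                rw [hUeq x hU]
                refine le_min hᾱαmax ?_
                have h3 : ᾱ ≤ A k x := (not_le.1 h2).le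
                linarith only [hAinc x, h3]
              have hv1 := hVle1 (k+1) x hge
              linarith only [hv1, hψ1]
            · have hV1 : V k x ≤ 1 := hVle1 k x (not_le.1 h2).le
              rw [hVdn k x (hdown hU)]
              have := mul_le_mul_of_nonneg_left hV1 hψ0.le
              linarith only [this]
    have hcoef : ∀ (r : ℝ), 0 ≤ r → r ≤ ψ → ∀ x,
        0 ≤ ψ - (ψ - r) * UI x ∧ ψ - (ψ - r) * UI x ≤ ψ := by
      intro r hr0 hrψ x
      have hc0 : 0 ≤ ψ - r := by linarith only [hrψ]
      have hup : (ψ - r) * UI x ≤ (ψ - r) * 1 := mul_le_mul_of_nonneg_left (hUI1 x) hc0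
      have hlo : 0 ≤ (ψ - r) * UI x := mul_nonneg hc0 (hUI0 x)
      constructor <;> linarith only [hup, hlo, hr0, hrψ]
    have hg0int : Integrable g0 μ := (hWint k).indicator hS0m
    have hgbint : ∀ (r : ℝ), 0 ≤ r → r ≤ ψ → ∀ (S : Set Ω), MeasurableSet S →
        Integrable (S.indicator (fun x => V k x * (ψ - (ψ - r) * UI x))) μ := by
      intro r hr0 hrψ S hS
      apply hbint _ (((hVm k).mul
        (measurable_const.sub (hUIm.const_mul (ψ - r)))).indicator hS).aestronglyMeasurable
        (ψ^k * ψ)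
      filter_upwards [hVb] with x hx
      by_cases hmem : x ∈ S
      · rw [Set.indicator_of_mem hmem]
        obtain ⟨hcl, hcu⟩ := hcoef r hr0 hrψ x
        show |V k x * (ψ - (ψ - r) * UI x)| ≤ ψ ^ k * ψ
        rw [abs_of_nonneg (mul_nonneg (hV0 k x).le hcl)]
        have h1 : V k x * (ψ - (ψ - r) * UI x) ≤ V k x * ψ :=
          mul_le_mul_of_nonneg_left hcu (hV0 k x).le
        have h2 : V k x * ψ ≤ ψ^k * ψ := mul_le_mul_of_nonneg_right (hx k) hψ0.le
        linarith only [h1, h2]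
      · rw [Set.indicator_of_notMem hmem, abs_zero]
        exact (mul_pos hψk0 hψ0).le
    have hg1int : Integrable g1 μ := hgbint (q/p) hqp1.le hqpψ S1 hS1m
    have hg2int : Integrable g2 μ := hgbint 1 zero_le_one hψ1.le S2 hS2m
    have hg3int : Integrable g3 μ := (integrable_const ψ).indicator hS3m
    have hstep1 : ∫ x, W (k+1) x ∂μ ≤ ∫ x, (g0 x + g1 x + g2 x + g3 x) ∂μ :=
      integral_mono_ae (hWint (k+1)) (((hg0int.add hg1int).add hg2int).add hg3int) hmain
    have hsplit4 : ∫ x, (g0 x + g1 x + g2 x + g3 x) ∂μ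
        = (∫ x, g0 x ∂μ) + (∫ x, g1 x ∂μ) + (∫ x, g2 x ∂μ) + (∫ x, g3 x ∂μ) := by
      have h34 : ∫ x, (g0 x + g1 x + g2 x + g3 x) ∂μ
          = (∫ x, (g0 x + g1 x + g2 x) ∂μ) + ∫ x, g3 x ∂μ :=
        integral_add ((hg0int.add hg1int).add hg2int) hg3int
      have h23 : ∫ x, (g0 x + g1 x + g2 x) ∂μ
          = (∫ x, (g0 x + g1 x) ∂μ) + ∫ x, g2 x ∂μ :=
        integral_add (hg0int.add hg1int) hg2int
      have h12 : ∫ x, (g0 x + g1 x) ∂μ = (∫ x, g0 x ∂μ) + ∫ x, g1 x ∂μ :=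
        integral_add hg0int hg1int
      rw [h34, h23, h12]
    have hg3eq : ∫ x, g3 x ∂μ = ψ * (μ S3).toReal := by
      calc ∫ x, g3 x ∂μ = (μ S3).toReal • ψ := integral_indicator_const ψ hS3m
      _ = ψ * (μ S3).toReal := by rw [smul_eq_mul]; ring
    have hWS : ∀ (S : Set Ω), (∀ x ∈ S, k < σ x) →
        ∫ x, S.indicator (V k) x ∂μ = ∫ x, S.indicator (W k) x ∂μ := by
      intro S hS
      apply integral_congr_ae
      apply Filter.Eventually.of_forall
      intro x
      by_cases hmem : x ∈ S
      · rw [Set.indicator_of_mem hmem, Set.indicator_of_mem hmem]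
        show V k x = V (min k (σ x)) x
        rw [min_eq_left (le_of_lt (hS x hmem))]
      · rw [Set.indicator_of_notMem hmem, Set.indicator_of_notMem hmem]
    have hb1 : ∫ x, g1 x ∂μ ≤ ∫ x, S1.indicator (W k) x ∂μ := by
      have he : ∀ x, g1 x = ψ * f1 x - (ψ - q/p) * (f1 x * UI x) := by
        intro x
        rw [hg1def, hf1def]
        by_cases hmem : x ∈ S1
        · rw [Set.indicator_of_mem hmem, Set.indicator_of_mem hmem]; ring
        · rw [Set.indicator_of_notMem hmem, Set.indicator_of_notMem hmem]; ring
      have heint : ∫ x, g1 x ∂μ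
          = ψ * (∫ x, f1 x ∂μ) - (ψ - q/p) * ∫ x, f1 x * UI x ∂μ := by
        calc ∫ x, g1 x ∂μ = ∫ x, (ψ * f1 x - (ψ - q/p) * (f1 x * UI x)) ∂μ :=
              integral_congr_ae (Filter.Eventually.of_forall he)
        _ = (∫ x, ψ * f1 x ∂μ) - ∫ x, (ψ - q/p) * (f1 x * UI x) ∂μ :=
              integral_sub (hf1int.const_mul ψ) (hf1UIint.const_mul (ψ - q/p))
        _ = ψ * (∫ x, f1 x ∂μ) - (ψ - q/p) * ∫ x, f1 x * UI x ∂μ := by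
              rw [integral_const_mul, integral_const_mul]
      have hψq : ψ * q = p := by rw [hψdef]; exact div_mul_cancel₀ p hq0.ne'
      have hqpmul : q / p * p = q := div_mul_cancel₀ q hp0.ne'
      have hone : ψ - (ψ - q/p) * p = 1 := by
        have h1 : ψ - (ψ - q/p) * p = ψ * (1 - p) + (q/p) * p := by ring
        rw [h1, hqpmul, ← hq, hψq, hq]; ring
      have hc0 : 0 ≤ ψ - q/p := by linarith only [hqpψ]
      have hkey := mul_le_mul_of_nonneg_left hcore1 hc0
      have hfW : ∫ x, f1 x ∂μ = ∫ x, S1.indicator (W k) x ∂μ := by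
        rw [hf1def]
        exact hWS S1 (fun x hx => (hS1sub x hx).1)
      rw [heint, ← hfW]
      have hid : ψ * (∫ x, f1 x ∂μ) - (ψ - q/p) * (p * ∫ x, f1 x ∂μ)
          = (ψ - (ψ - q/p) * p) * ∫ x, f1 x ∂μ := by ring
      rw [hone, one_mul] at hid
      linarith only [hkey, hid]
    have hb2 : ∫ x, g2 x ∂μ ≤ (∫ x, S2.indicator (W k) x ∂μ) + ψ * (μ S2).toReal := by
      have he : ∀ x, g2 x = ψ * f2 x - (ψ - 1) * (f2 x * UI x) := by
        intro x
        rw [hg2def, hf2def]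
        by_cases hmem : x ∈ S2
        · rw [Set.indicator_of_mem hmem, Set.indicator_of_mem hmem]; ring
        · rw [Set.indicator_of_notMem hmem, Set.indicator_of_notMem hmem]; ring
      have heint : ∫ x, g2 x ∂μ
          = ψ * (∫ x, f2 x ∂μ) - (ψ - 1) * ∫ x, f2 x * UI x ∂μ := by
        calc ∫ x, g2 x ∂μ = ∫ x, (ψ * f2 x - (ψ - 1) * (f2 x * UI x)) ∂μ :=
              integral_congr_ae (Filter.Eventually.of_forall he)
        _ = (∫ x, ψ * f2 x ∂μ) - ∫ x, (ψ - 1) * (f2 x * UI x) ∂μ :=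
              integral_sub (hf2int.const_mul ψ) (hf2UIint.const_mul (ψ - 1))
        _ = ψ * (∫ x, f2 x ∂μ) - (ψ - 1) * ∫ x, f2 x * UI x ∂μ := by
              rw [integral_const_mul, integral_const_mul]
      have hψq : ψ * q = p := by rw [hψdef]; exact div_mul_cancel₀ p hq0.ne'
      have hone : ψ - (ψ - 1) * p = 2*p := by
        have h1 : ψ - (ψ - 1) * p = ψ * (1 - p) + p := by ring
        rw [h1, ← hq, hψq]; ring
      have hc0 : 0 ≤ ψ - 1 := by linarith only [hψ1]
      have hkey := mul_le_mul_of_nonneg_left hcore2 hc0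
      have hfW : ∫ x, f2 x ∂μ = ∫ x, S2.indicator (W k) x ∂μ := by
        rw [hf2def]
        exact hWS S2 (fun x hx => (hS2sub x hx).1)
      have hf2le : ∀ x, f2 x ≤ S2.indicator (fun _ => ψ) x := by
        intro x
        rw [hf2def]
        by_cases hmem : x ∈ S2
        · rw [Set.indicator_of_mem hmem, Set.indicator_of_mem hmem]
          obtain ⟨hlt, hnot, hle⟩ := hS2sub x hmem
          have hge : γ * ᾱ ≤ A k x := by
            rcases le_total (γ*αmax) ᾱ with hc | hc
            · rw [min_eq_left hc] at hnot
              have h4 : γ * ᾱ ≤ γ * αmax := mul_le_mul_of_nonneg_left hᾱαmax hγ0.le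
              have h5 := not_le.1 hnot
              linarith only [h4, h5]
            · rw [min_eq_right hc] at hnot
              exact absurd hle hnot
          exact hVle' k x hge
        · rw [Set.indicator_of_notMem hmem, Set.indicator_of_notMem hmem]
      have hIψ : ∫ x, f2 x ∂μ ≤ ψ * (μ S2).toReal := by
        calc ∫ x, f2 x ∂μ ≤ ∫ x, S2.indicator (fun _ => ψ) x ∂μ :=
            integral_mono hf2int ((integrable_const ψ).indicator hS2m) hf2le
        _ = (μ S2).toReal • ψ := integral_indicator_const ψ hS2m
        _ = ψ * (μ S2).toReal := by rw [smul_eq_mul]; ring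
      have hI20 : 0 ≤ ∫ x, f2 x ∂μ := integral_nonneg hf20
      rw [heint, ← hfW]
      have hid : ψ * (∫ x, f2 x ∂μ) - (ψ - 1) * (p * ∫ x, f2 x ∂μ)
          = (ψ - (ψ - 1) * p) * ∫ x, f2 x ∂μ := by ring
      rw [hone] at hid
      have hsmall : (2*p - 1) * (∫ x, f2 x ∂μ) ≤ 1 * ∫ x, f2 x ∂μ :=
        mul_le_mul_of_nonneg_right (by linarith) hI20
      have hexp : 2*p * (∫ x, f2 x ∂μ)
          = (∫ x, f2 x ∂μ) + (2*p - 1) * (∫ x, f2 x ∂μ) := by ring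
      linarith only [hkey, hid, hsmall, hexp, hIψ, hI20]
    have hpart : ∀ x, W k x = S0.indicator (W k) x + S1.indicator (W k) x
        + S2.indicator (W k) x + S3.indicator (W k) x := by
      intro x
      by_cases h0 : σ x ≤ k
      · have hnlt : ¬ k < σ x := not_lt.2 h0
        rw [Set.indicator_of_mem (show x ∈ S0 from h0),
          Set.indicator_of_notMem (fun hc => hnlt (hS1sub x hc).1),
          Set.indicator_of_notMem (fun hc => hnlt (hS2sub x hc).1),
          Set.indicator_of_notMem (fun hc => hnlt (hS3sub x hc).1)]
        ring
      · have hk : k < σ x := not_le.1 h0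
        rw [Set.indicator_of_notMem (show x ∉ S0 from h0)]
        by_cases h1 : A k x ≤ min (γ*αmax) ᾱ
        · rw [Set.indicator_of_mem (show x ∈ S1 from ⟨hk, h1⟩),
            Set.indicator_of_notMem (fun hc => (hS2sub x hc).2.1 h1),
            Set.indicator_of_notMem
              (fun hc => (hS3sub x hc).2 (le_trans h1 (min_le_right _ _)))]
          ring
        · by_cases h2 : A k x ≤ ᾱ
          · rw [Set.indicator_of_notMem (fun hc => h1 (hS1sub x hc).2),
              Set.indicator_of_mem (show x ∈ S2 from ⟨hk, h1, h2⟩),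
              Set.indicator_of_notMem (fun hc => (hS3sub x hc).2 h2)]
            ring
          · rw [Set.indicator_of_notMem (fun hc => h1 (hS1sub x hc).2),
              Set.indicator_of_notMem (fun hc => h2 (hS2sub x hc).2.2),
              Set.indicator_of_mem (show x ∈ S3 from ⟨hk, h2⟩)]
            ring
    have hi : ∀ (S : Set Ω), MeasurableSet S → Integrable (S.indicator (W k)) μ :=
      fun S hS => (hWint k).indicator hS
    have hWsplit : ∫ x, W k x ∂μ = (∫ x, S0.indicator (W k) x ∂μ)
        + (∫ x, S1.indicator (W k) x ∂μ) + (∫ x, S2.indicator (W k) x ∂μ)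
        + (∫ x, S3.indicator (W k) x ∂μ) := by
      calc ∫ x, W k x ∂μ = ∫ x, (S0.indicator (W k) x + S1.indicator (W k) x
          + S2.indicator (W k) x + S3.indicator (W k) x) ∂μ :=
            integral_congr_ae (Filter.Eventually.of_forall hpart)
      _ = _ := by
          have h34 : ∫ x, (S0.indicator (W k) x + S1.indicator (W k) x
              + S2.indicator (W k) x + S3.indicator (W k) x) ∂μ
              = (∫ x, (S0.indicator (W k) x + S1.indicator (W k) x
                + S2.indicator (W k) x) ∂μ) + ∫ x, S3.indicator (W k) x ∂μ :=
            integral_add (((hi S0 hS0m).add (hi S1 hS1m)).add (hi S2 hS2m)) (hi S3 hS3m)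
          have h23 : ∫ x, (S0.indicator (W k) x + S1.indicator (W k) x
              + S2.indicator (W k) x) ∂μ
              = (∫ x, (S0.indicator (W k) x + S1.indicator (W k) x) ∂μ)
                + ∫ x, S2.indicator (W k) x ∂μ :=
            integral_add ((hi S0 hS0m).add (hi S1 hS1m)) (hi S2 hS2m)
          have h12 : ∫ x, (S0.indicator (W k) x + S1.indicator (W k) x) ∂μ
              = (∫ x, S0.indicator (W k) x ∂μ) + ∫ x, S1.indicator (W k) x ∂μ :=
            integral_add (hi S0 hS0m) (hi S1 hS1m)
          rw [h34, h23, h12]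
    have hS3nonneg : 0 ≤ ∫ x, S3.indicator (W k) x ∂μ :=
      integral_nonneg (fun x => Set.indicator_nonneg (fun y _ => hW0 k y) x)
    have hμ23 : (μ S2).toReal + (μ S3).toReal ≤ 1 := by
      have hdisj : Disjoint S2 S3 := by
        rw [Set.disjoint_left]
        intro x h2 h3
        exact (hS3sub x h3).2 (hS2sub x h2).2.2
      have hun : μ S2 + μ S3 = μ (S2 ∪ S3) := (measure_union hdisj hS3m).symm
      have h1 : (μ (S2 ∪ S3)).toReal ≤ 1 := by
        have := ENNReal.toReal_mono (measure_ne_top μ _)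
          (measure_mono (Set.subset_univ (S2 ∪ S3)))
        simpa using this
      calc (μ S2).toReal + (μ S3).toReal = (μ S2 + μ S3).toReal :=
          (ENNReal.toReal_add (measure_ne_top μ _) (measure_ne_top μ _)).symm
      _ = (μ (S2 ∪ S3)).toReal := by rw [hun]
      _ ≤ 1 := h1
    have hg0eq : ∫ x, g0 x ∂μ = ∫ x, S0.indicator (W k) x ∂μ := rfl
    have hψ23 := mul_le_mul_of_nonneg_left hμ23 hψ0.le
    linarith only [hstep1, hsplit4, hg0eq, hb1, hb2, hg3eq, hWsplit, hS3nonneg, hψ23]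
  -- ## iterate the recursion
  have hWn : ∫ x, W n x ∂μ ≤ 1 + n * ψ := by
    have hmain : ∀ m : ℕ, ∫ x, W m x ∂μ ≤ 1 + m * ψ := by
      intro m
      induction m with
      | zero =>
        simp only [Nat.cast_zero, zero_mul, add_zero]
        have h1 : ∀ x, W 0 x ≤ 1 := by
          intro x
          have : min 0 (σ x) = 0 := Nat.zero_min _
          rw [hWdef]; simp only [this]
          apply hVle1
          rw [hA0 x]
          nth_rewrite 1 [← mul_one ᾱ]
          exact mul_le_mul_of_nonneg_left hγj hᾱ.le
        calc ∫ x, W 0 x ∂μ ≤ ∫ _x, (1:ℝ) ∂μ :=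
            integral_mono (hWint 0) (integrable_const 1) h1
        _ = 1 := by simp
      | succ m ih =>
        calc ∫ x, W (m+1) x ∂μ ≤ (∫ x, W m x ∂μ) + ψ := hrec m
        _ ≤ 1 + m * ψ + ψ := by linarith
        _ = 1 + (m+1 : ℕ) * ψ := by push_cast; ring
    exact hmain n
  -- ## Markov inequality at threshold θ
  set θ : ℝ := (ᾱ / (β * ᾱ)) ^ s with hθdef
  have hθpos : 0 < θ := Real.rpow_pos_of_pos (by positivity) s
  set H : Set Ω := {x | ∃ k, k ≤ T x ∧ k ≤ n ∧ A k x ≤ β * ᾱ} with hHdef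
  have hHsub : H ⊆ {x | θ ≤ W n x} := by
    rintro x ⟨k, hkT, hkn, hkA⟩
    have hkD : k ∈ D x := Or.inr hkA
    set i := sInf (D x) with hidef
    have hik : i ≤ k := Nat.sInf_le hkD
    have hσx : σ x = i := min_eq_right (le_trans hik hkT)
    have hin : i ≤ n := le_trans hik hkn
    have hAi : A i x ≤ β * ᾱ := by
      rcases Nat.sInf_mem (⟨n, hDne x⟩ : (D x).Nonempty) with h | h
      · have : i = k := by omega
        rw [this]; exact hkA
      · exact h
    have hminn : min n (σ x) = i := by rw [hσx]; exact min_eq_right hin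
    show θ ≤ W n x
    rw [hWdef]; simp only [hminn]
    rw [hθdef, hVdef]
    apply Real.rpow_le_rpow (by positivity) _ hs0.le
    exact div_le_div_of_nonneg_left hᾱ.le (hpos i x) hAi
  have hMark : θ * (μ {x | θ ≤ W n x}).toReal ≤ ∫ x, W n x ∂μ :=
    mul_meas_ge_le_integral_of_nonneg
      (Filter.Eventually.of_forall fun x => hW0 n x) (hWint n) θ
  have hβsθ : β ^ s * θ = 1 := by
    rw [hθdef, ← Real.mul_rpow hβ0.le (by positivity)]
    have : β * (ᾱ / (β * ᾱ)) = 1 := by field_simp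
    rw [this, Real.one_rpow]
  have hμH : (μ H).toReal ≤ (1 + n * ψ) * β ^ s := by
    have h1 : (μ H).toReal ≤ (μ {x | θ ≤ W n x}).toReal :=
      ENNReal.toReal_mono (measure_ne_top μ _) (measure_mono hHsub)
    have h2 : θ * (μ H).toReal ≤ 1 + n * ψ := by
      calc θ * (μ H).toReal ≤ θ * (μ {x | θ ≤ W n x}).toReal :=
          mul_le_mul_of_nonneg_left h1 hθpos.le
      _ ≤ ∫ x, W n x ∂μ := hMark
      _ ≤ 1 + n * ψ := hWn
    have hβs0 : 0 < β ^ s := Real.rpow_pos_of_pos hβ0 s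
    calc (μ H).toReal = (β ^ s * θ) * (μ H).toReal := by rw [hβsθ, one_mul]
    _ = β ^ s * (θ * (μ H).toReal) := by ring
    _ ≤ β ^ s * (1 + n * ψ) := mul_le_mul_of_nonneg_left h2 hβs0.le
    _ = (1 + n * ψ) * β ^ s := by ring
  -- ## log computation
  have hβskey : β ^ s ≤ (q/p) * (n:ℝ) ^ (-(1+w)) := by
    rw [hsdef, hψdef]
    exact stmt11_log γ p q w β n hγ0 hγ1 hp hp1 hq hn hw hβ0 hβ hγhalf
      (le_trans (le_max_right _ _) hγbig)
  have hμH2 : (μ H).toReal ≤ (n:ℝ) ^ (-w) + (q/p) * (n:ℝ) ^ (-(1+w)) := by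
    have hpow : (n:ℝ) * (n:ℝ) ^ (-(1+w)) = (n:ℝ) ^ (-w) := by
      nth_rewrite 1 [← Real.rpow_one (n:ℝ)]
      rw [← Real.rpow_add hn0]
      ring_nf
    have hnn : (0:ℝ) ≤ (n:ℝ) ^ (-(1+w)) := Real.rpow_nonneg hn0.le _
    calc (μ H).toReal ≤ (1 + n * ψ) * β ^ s := hμH
    _ ≤ (1 + n * ψ) * ((q/p) * (n:ℝ) ^ (-(1+w))) := by
        apply mul_le_mul_of_nonneg_left hβskey
        positivity
    _ = (q/p) * (n:ℝ) ^ (-(1+w)) + (ψ * (q/p)) * ((n:ℝ) * (n:ℝ) ^ (-(1+w))) := by ring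
    _ = (q/p) * (n:ℝ) ^ (-(1+w)) + (n:ℝ) ^ (-w) := by
        rw [hpow]
        have : ψ * (q/p) = 1 := by rw [hψdef]; field_simp
        rw [this, one_mul]
    _ = (n:ℝ) ^ (-w) + (q/p) * (n:ℝ) ^ (-(1+w)) := by ring
  -- ## q/p ≤ c
  have hcge : q/p ≤ 2 * Real.sqrt (p*q) / (1 - 2 * Real.sqrt (p*q))^2 :=
    stmt11_c p q hp hp1 hq
  -- ## final set inclusion and measure arithmetic
  set Good : Set Ω := {x | T x ≤ n ∧
      ∑ k ∈ Finset.Icc 1 (T x), oc (A k x) ≤ (n : ℝ) * oc (β * ᾱ)} with hGdef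
  set E : Set Ω := {x | T x ≤ n} ∩ Hᶜ with hEdef
  have hEGood : E ⊆ Good := by
    rintro x ⟨hxT, hxH⟩
    simp only [hHdef, Set.mem_compl_iff, Set.mem_setOf_eq, not_exists, not_and] at hxH
    refine ⟨hxT, ?_⟩
    have hterm : ∀ k ∈ Finset.Icc 1 (T x), oc (A k x) ≤ oc (β * ᾱ) := by
      intro k hk
      rw [Finset.mem_Icc] at hk
      have hkA : ¬ (A k x ≤ β * ᾱ) := hxH k hk.2 (le_trans hk.2 hxT)
      exact hocmono _ _ (by positivity) (le_of_not_ge hkA)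
    calc ∑ k ∈ Finset.Icc 1 (T x), oc (A k x)
        ≤ ∑ _k ∈ Finset.Icc 1 (T x), oc (β * ᾱ) := Finset.sum_le_sum hterm
    _ = (T x) * oc (β * ᾱ) := by
        rw [Finset.sum_const, Nat.card_Icc]
        simp [nsmul_eq_mul]
    _ ≤ (n : ℝ) * oc (β * ᾱ) := by
        apply mul_le_mul_of_nonneg_right _ (hoc0 _ (by positivity))
        exact_mod_cast hxT
  have hHm : MeasurableSet H := by
    have : H = ⋃ k, ({x | k ≤ T x} ∩ {x | k ≤ n} ∩ {x | A k x ≤ β * ᾱ}) := by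
      ext x
      simp only [hHdef, Set.mem_setOf_eq, Set.mem_iUnion, Set.mem_inter_iff]
      constructor
      · rintro ⟨k, h1, h2, h3⟩; exact ⟨k, ⟨h1, h2⟩, h3⟩
      · rintro ⟨k, ⟨h1, h2⟩, h3⟩; exact ⟨k, h1, h2, h3⟩
    rw [this]
    refine MeasurableSet.iUnion fun k => ((?_ : MeasurableSet _).inter ?_).inter ?_
    · exact hTm measurableSet_Ici
    · by_cases hk : k ≤ n
      · have : {x : Ω | k ≤ n} = Set.univ := by ext x; simp [hk]
        rw [this]; exact MeasurableSet.univ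
      · have : {x : Ω | k ≤ n} = ∅ := by ext x; simp [hk]
        rw [this]; exact MeasurableSet.empty
    · exact hAm k measurableSet_Iic
  have hTnm : MeasurableSet {x | T x ≤ n} := hTm measurableSet_Iic
  have hEm : MeasurableSet E := hTnm.inter hHm.compl
  have hsplit : (μ {x | T x ≤ n}).toReal ≤ (μ E).toReal + (μ H).toReal := by
    have hsub : {x | T x ≤ n} ⊆ E ∪ H := by
      intro x hx
      by_cases hxH : x ∈ H
      · exact Or.inr hxH
      · exact Or.inl ⟨hx, hxH⟩
    calc (μ {x | T x ≤ n}).toReal ≤ (μ (E ∪ H)).toReal :=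
        ENNReal.toReal_mono (measure_ne_top μ _) (measure_mono hsub)
    _ ≤ (μ E + μ H).toReal :=
        ENNReal.toReal_mono (by finiteness) (measure_union_le E H)
    _ = (μ E).toReal + (μ H).toReal :=
        ENNReal.toReal_add (measure_ne_top μ _) (measure_ne_top μ _)
  have hcompl : (μ {x | T x ≤ n}).toReal = 1 - (μ {x | n < T x}).toReal := by
    have h1 : μ {x | T x ≤ n} + μ ({x | T x ≤ n}ᶜ) = 1 :=
      (measure_add_measure_compl hTnm).trans measure_univ
    have h2 : ({x : Ω | T x ≤ n}ᶜ) = {x | n < T x} := by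
      ext x; simp [not_le]
    rw [h2] at h1
    have h3 := congrArg ENNReal.toReal h1
    rw [ENNReal.toReal_add (measure_ne_top μ _) (measure_ne_top μ _)] at h3
    simp at h3
    linarith
  refine le_trans ?_ (measure_mono hEGood)
  apply ENNReal.ofReal_le_of_le_toReal
  have hfin : (μ H).toReal ≤ (n:ℝ) ^ (-w)
      + (2 * Real.sqrt (p*q) / (1 - 2 * Real.sqrt (p*q))^2) * (n:ℝ) ^ (-(1+w)) := by
    have hnn : (0:ℝ) ≤ (n:ℝ) ^ (-(1+w)) := Real.rpow_nonneg hn0.le _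
    calc (μ H).toReal ≤ (n:ℝ) ^ (-w) + (q/p) * (n:ℝ) ^ (-(1+w)) := hμH2
    _ ≤ (n:ℝ) ^ (-w)
        + (2 * Real.sqrt (p*q) / (1 - 2 * Real.sqrt (p*q))^2) * (n:ℝ) ^ (-(1+w)) := by
        have := mul_le_mul_of_nonneg_right hcge hnn
        linarith
  linarith [hsplit, hcompl, hfin]
end

section
/- Let 1/2 < p < 1, q = 1 − p, γ ∈ (0,1), and s > 0 be such that p·γ^{s} > q. Then there exists a constant C > 0, depending only on p, γ, and s, such that for every integer n ≥ 2, Σ_{l=1}^{n} min{ 1, n·(q/p)^{l} } · γ^{−s·l} ≤ C · (log n) · n^{s·log(1/γ)/log(p/q)}. -/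
lemma geom_Ico_le {r : ℝ} (h0 : 0 ≤ r) (h1 : r < 1) (a b : ℕ) :
    ∑ i ∈ Finset.Ico a b, r ^ i ≤ r ^ a / (1 - r) := by
  have h1r : (0:ℝ) < 1 - r := by linarith
  rcases le_or_gt a b with hab | hab
  · rw [geom_sum_Ico h1.ne hab]
    have heq : (r ^ b - r ^ a) / (r - 1) = (r ^ a - r ^ b) / (1 - r) := by
      rw [← neg_div_neg_eq]; ring_nf
    rw [heq, div_le_div_iff₀ h1r h1r]
    nlinarith [pow_nonneg h0 b]
  · rw [Finset.Ico_eq_empty (by omega)]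
    simp only [Finset.sum_empty]
    positivity

/-- Deterministic summation bound: if `1/2 < p < 1`, `q = 1 − p`,
`γ ∈ (0,1)`, `s > 0` and `p·γ^s > q`, then there is a constant `C > 0` (depending only
on `p`, `γ`, `s`) such that for all `n ≥ 2`,
`Σ_{l=1}^{n} min{1, n·(q/p)^l}·γ^{−s·l} ≤ C·(log n)·n^{s·log(1/γ)/log(p/q)}`. -/
theorem stmt_12
    (p q γ s : ℝ) (hp : 1/2 < p) (hp1 : p < 1) (hq : q = 1 - p)
    (hγ0 : 0 < γ) (hγ1 : γ < 1) (hs : 0 < s) (hpγ : q < p * γ ^ s) :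
    ∃ C > 0, ∀ n : ℕ, 2 ≤ n →
      ∑ l ∈ Finset.Icc 1 n, (min 1 ((n : ℝ) * (q/p)^l)) * γ ^ (-(s * (l : ℝ))) ≤
        C * Real.log n * (n : ℝ) ^ (s * Real.log (1/γ) / Real.log (p/q)) := by
  have hq0 : 0 < q := by rw [hq]; linarith
  have hqp : q < p := by rw [hq]; linarith
  have hp0 : 0 < p := by linarith
  set α : ℝ := q / p with hα
  have hα0 : 0 < α := div_pos hq0 hp0
  have hα1 : α < 1 := (div_lt_one hp0).mpr hqp
  have hγs : 0 < γ ^ s := Real.rpow_pos_of_pos hγ0 s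
  set β : ℝ := γ ^ (-s) with hβ
  have hβ0 : 0 < β := Real.rpow_pos_of_pos hγ0 _
  have hβeq : β = (γ ^ s)⁻¹ := Real.rpow_neg hγ0.le s
  have hγs1 : γ ^ s < 1 := Real.rpow_lt_one hγ0.le hγ1 hs
  have hβ1 : 1 < β := by rw [hβeq]; exact (one_lt_inv₀ hγs).mpr hγs1
  have hαγ : α < γ ^ s := (div_lt_iff₀ hp0).mpr (by linarith [hpγ])
  set r : ℝ := α * β with hr
  have hr0 : 0 < r := mul_pos hα0 hβ0
  have hr1 : r < 1 := by
    calc r = α * (γ ^ s)⁻¹ := by rw [hr, hβeq]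
    _ < γ ^ s * (γ ^ s)⁻¹ := by gcongr
    _ = 1 := mul_inv_cancel₀ hγs.ne'
  have hlogpq : 0 < Real.log (p / q) := Real.log_pos ((one_lt_div hq0).mpr hqp)
  have hC'0 : 0 < β ^ 2 / (β - 1) + 1 / (1 - r) := by
    have := pow_pos hβ0 2
    have h1 : (0:ℝ) < β - 1 := by linarith
    have h2 : (0:ℝ) < 1 - r := by linarith
    positivity
  refine ⟨(β ^ 2 / (β - 1) + 1 / (1 - r)) / Real.log 2,
    div_pos hC'0 (Real.log_pos one_lt_two), ?_⟩
  intro n hn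
  have h2n : (2:ℝ) ≤ (n:ℝ) := by exact_mod_cast hn
  have hn0 : (0:ℝ) < (n:ℝ) := by linarith
  have hlogn : Real.log 2 ≤ Real.log n := Real.log_le_log (by norm_num) h2n
  have hlogn0 : 0 < Real.log n := lt_of_lt_of_le (Real.log_pos one_lt_two) hlogn
  set L : ℝ := Real.log n / Real.log (p / q) with hL
  have hL0 : 0 < L := div_pos hlogn0 hlogpq
  set m : ℕ := ⌈L⌉₊ with hm
  have hLm : L ≤ (m:ℝ) + 1 := le_trans (Nat.le_ceil L) (by linarith)
  have hmL : (m:ℝ) + 1 ≤ L + 2 := by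
    have := Nat.ceil_lt_add_one hL0.le
    linarith
  set E : ℝ := s * Real.log (1 / γ) / Real.log (p / q) with hE
  -- key rpow identities
  have hαL : α ^ L = (n:ℝ)⁻¹ := by
    rw [Real.rpow_def_of_pos hα0]
    have h1 : Real.log α = -Real.log (p / q) := by
      rw [hα, show q / p = (p / q)⁻¹ from (inv_div p q).symm, Real.log_inv]
    rw [h1, hL]
    rw [show -Real.log (p / q) * (Real.log n / Real.log (p / q)) = -Real.log n by
      field_simp]
    rw [Real.exp_neg, Real.exp_log hn0]
  have hβL : β ^ L = (n:ℝ) ^ E := by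
    rw [Real.rpow_def_of_pos hβ0, Real.rpow_def_of_pos hn0]
    congr 1
    have hlogβ : Real.log β = s * Real.log (1 / γ) := by
      rw [hβ, Real.log_rpow hγ0, one_div, Real.log_inv]; ring
    rw [hlogβ, hL, hE]; ring
  have hnE0 : 0 < (n:ℝ) ^ E := Real.rpow_pos_of_pos hn0 E
  -- pointwise bound
  have hterm : ∀ l ∈ Finset.Icc 1 n,
      (min 1 ((n : ℝ) * (q/p)^l)) * γ ^ (-(s * (l : ℝ))) ≤
        (if l ≤ m then β ^ l else (n:ℝ) * r ^ l) := by
    intro l _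
    have hγl : γ ^ (-(s * (l:ℝ))) = β ^ l := by
      rw [hβ, ← Real.rpow_natCast (γ ^ (-s)) l, ← Real.rpow_mul hγ0.le]
      congr 1; ring
    rw [hγl]
    by_cases hlm : l ≤ m
    · rw [if_pos hlm]
      calc (min 1 ((n : ℝ) * (q/p)^l)) * β ^ l ≤ 1 * β ^ l := by
            exact mul_le_mul_of_nonneg_right (min_le_left _ _) (pow_nonneg hβ0.le l)
      _ = β ^ l := one_mul _
    · rw [if_neg hlm]
      calc (min 1 ((n : ℝ) * (q/p)^l)) * β ^ l
          ≤ ((n:ℝ) * α ^ l) * β ^ l :=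
            mul_le_mul_of_nonneg_right (min_le_right _ _) (pow_nonneg hβ0.le l)
      _ = (n:ℝ) * r ^ l := by rw [hr, mul_pow]; ring
  -- sum splitting
  have hsplit : ∑ l ∈ Finset.Icc 1 n, (if l ≤ m then β ^ l else (n:ℝ) * r ^ l)
      = (∑ l ∈ (Finset.Icc 1 n).filter (fun l => l ≤ m), β ^ l)
        + ∑ l ∈ (Finset.Icc 1 n).filter (fun l => ¬ l ≤ m), (n:ℝ) * r ^ l :=
    Finset.sum_ite _ _
  have hpart1 : (∑ l ∈ (Finset.Icc 1 n).filter (fun l => l ≤ m), β ^ l)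
      ≤ β ^ (m + 1) / (β - 1) := by
    have hsub : (Finset.Icc 1 n).filter (fun l => l ≤ m) ⊆ Finset.range (m + 1) := by
      intro l hl
      simp only [Finset.mem_filter, Finset.mem_Icc] at hl
      exact Finset.mem_range.mpr (by omega)
    calc (∑ l ∈ (Finset.Icc 1 n).filter (fun l => l ≤ m), β ^ l)
        ≤ ∑ l ∈ Finset.range (m + 1), β ^ l :=
          Finset.sum_le_sum_of_subset_of_nonneg hsub
            (fun i _ _ => pow_nonneg hβ0.le i)
    _ = (β ^ (m + 1) - 1) / (β - 1) := geom_sum_eq hβ1.ne' (m + 1)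
    _ ≤ β ^ (m + 1) / (β - 1) := by
          apply div_le_div_of_nonneg_right ?_ (by linarith)
          linarith
  have hpart2 : (∑ l ∈ (Finset.Icc 1 n).filter (fun l => ¬ l ≤ m), (n:ℝ) * r ^ l)
      ≤ (n:ℝ) * (r ^ (m + 1) / (1 - r)) := by
    rw [← Finset.mul_sum]
    apply mul_le_mul_of_nonneg_left ?_ hn0.le
    have hsub : (Finset.Icc 1 n).filter (fun l => ¬ l ≤ m) ⊆ Finset.Ico (m + 1) (n + 1) := by
      intro l hl
      simp only [Finset.mem_filter, Finset.mem_Icc] at hl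
      exact Finset.mem_Ico.mpr (by omega)
    calc (∑ l ∈ (Finset.Icc 1 n).filter (fun l => ¬ l ≤ m), r ^ l)
        ≤ ∑ l ∈ Finset.Ico (m + 1) (n + 1), r ^ l :=
          Finset.sum_le_sum_of_subset_of_nonneg hsub
            (fun i _ _ => pow_nonneg hr0.le i)
    _ ≤ r ^ (m + 1) / (1 - r) := geom_Ico_le hr0.le hr1 _ _
  -- bounding powers via rpow
  have hβm : β ^ (m + 1) ≤ (n:ℝ) ^ E * β ^ (2:ℕ) := by
    have h1 : (β:ℝ) ^ (m + 1) = β ^ (((m:ℝ) + 1)) := by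
      rw [← Real.rpow_natCast β (m + 1)]; norm_num
    rw [h1]
    calc β ^ (((m:ℝ) + 1)) ≤ β ^ (L + 2) :=
          Real.rpow_le_rpow_of_exponent_le hβ1.le hmL
    _ = β ^ L * β ^ (2:ℝ) := Real.rpow_add hβ0 _ _
    _ = (n:ℝ) ^ E * β ^ (2:ℕ) := by
          rw [hβL, show (2:ℝ) = ((2:ℕ):ℝ) by norm_num, Real.rpow_natCast]
  have hrm : (n:ℝ) * r ^ (m + 1) ≤ (n:ℝ) ^ E := by
    have h1 : (r:ℝ) ^ (m + 1) = r ^ (((m:ℝ) + 1)) := by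
      rw [← Real.rpow_natCast r (m + 1)]; norm_num
    have h2 : r ^ (((m:ℝ) + 1)) ≤ r ^ L :=
      Real.rpow_le_rpow_of_exponent_ge hr0 hr1.le (by linarith)
    have h3 : r ^ L = (n:ℝ)⁻¹ * ((n:ℝ) ^ E) := by
      rw [hr, Real.mul_rpow hα0.le hβ0.le, hαL, hβL]
    calc (n:ℝ) * r ^ (m + 1) ≤ (n:ℝ) * r ^ L := by
          rw [h1]; exact mul_le_mul_of_nonneg_left h2 hn0.le
    _ = (n:ℝ) * ((n:ℝ)⁻¹ * (n:ℝ) ^ E) := by rw [h3]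
    _ = (n:ℝ) ^ E := by field_simp
  -- assemble
  have hmain : ∑ l ∈ Finset.Icc 1 n, (min 1 ((n : ℝ) * (q/p)^l)) * γ ^ (-(s * (l : ℝ)))
      ≤ (β ^ 2 / (β - 1) + 1 / (1 - r)) * (n:ℝ) ^ E := by
    calc ∑ l ∈ Finset.Icc 1 n, (min 1 ((n : ℝ) * (q/p)^l)) * γ ^ (-(s * (l : ℝ)))
        ≤ ∑ l ∈ Finset.Icc 1 n, (if l ≤ m then β ^ l else (n:ℝ) * r ^ l) :=
          Finset.sum_le_sum hterm
    _ = _ + _ := hsplit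
    _ ≤ β ^ (m + 1) / (β - 1) + (n:ℝ) * (r ^ (m + 1) / (1 - r)) :=
          add_le_add hpart1 hpart2
    _ ≤ ((n:ℝ) ^ E * β ^ (2:ℕ)) / (β - 1) + (n:ℝ) ^ E * (1 / (1 - r)) := by
          apply add_le_add
          · exact div_le_div_of_nonneg_right hβm (by linarith)
          · rw [mul_div_assoc'] at *
            calc (n:ℝ) * r ^ (m+1) / (1 - r) ≤ (n:ℝ) ^ E / (1 - r) :=
                  div_le_div_of_nonneg_right hrm (by linarith)
            _ = (n:ℝ) ^ E * (1 / (1 - r)) := by ring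
    _ = (β ^ 2 / (β - 1) + 1 / (1 - r)) * (n:ℝ) ^ E := by ring
  calc ∑ l ∈ Finset.Icc 1 n, (min 1 ((n : ℝ) * (q/p)^l)) * γ ^ (-(s * (l : ℝ)))
      ≤ (β ^ 2 / (β - 1) + 1 / (1 - r)) * (n:ℝ) ^ E := hmain
  _ ≤ ((β ^ 2 / (β - 1) + 1 / (1 - r)) / Real.log 2 * Real.log n) * (n:ℝ) ^ E := by
        apply mul_le_mul_of_nonneg_right ?_ hnE0.le
        rw [div_mul_eq_mul_div, le_div_iff₀ (Real.log_pos one_lt_two)]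
        exact mul_le_mul_of_nonneg_left hlogn hC'0.le
  _ = (β ^ 2 / (β - 1) + 1 / (1 - r)) / Real.log 2 * Real.log n * (n:ℝ) ^ E := by ring
end

section
/- Suppose the per-iteration oracle cost is oc(α) = c_f·α^{−4} + c_g·α^{−2} for constants c_f, c_g ≥ 0, and that γ > (2q)^{1/4}. Then there exists a constant C > 0, depending only on p and γ, such that for every integer n ≥ 2, E[ TOC(min{T, n}) ] ≤ C · n · (log n) · ( (c_f/ᾱ⁴) · n^{4·log(1/γ)/log(p/q)} + (c_g/ᾱ²) · n^{2·log(1/γ)/log(p/q)} ). -/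
open MeasureTheory ProbabilityTheory


lemma aux_key (p γ : ℝ) (hp : 1/2 < p) (hp1 : p < 1) (hγ0 : 0 < γ) (hγ1 : γ < 1)
    (Ω : Type) (mΩ : MeasurableSpace Ω) (μ : Measure Ω) (hμ : IsProbabilityMeasure μ)
    (F : Filtration ℕ mΩ) (A : ℕ → Ω → ℝ) (T : Ω → ℕ)
    (ᾱ : ℝ) (j j' : ℤ) (αmax : ℝ)
    (hᾱ : 0 < ᾱ) (hj : j ≤ 0) (hj' : j' ≤ 0) (hαmax : αmax = ᾱ * γ ^ j')
    (hA : StronglyAdapted F A) (hApos : ∀ k x, 0 < A k x) (hT : IsStoppingTime F (fun x => (T x : WithTop ℕ)))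
    (hA0 : ∀ x, A 0 x = ᾱ * γ ^ j)
    (hstep : ∀ k, ∀ᵐ x ∂μ, A (k+1) x = γ * A k x ∨ A (k+1) x = min αmax (γ⁻¹ * A k x))
    (hcond : ∀ k, ∀ᵐ x ∂μ, (k < T x ∧ A k x ≤ ᾱ) →
      p ≤ (μ[Set.indicator {x' | A (k+1) x' = min αmax (γ⁻¹ * A k x')}
              (fun _ => (1:ℝ)) | F k]) x)
    (e : ℕ) (he0 : 0 < e) (he : (1-p)/p < γ^e) :
    ∀ k, Integrable (fun x => (ᾱ / A k x)^e *
        Set.indicator {y | k ≤ T y} (fun _ => (1:ℝ)) x) μ ∧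
      ∫ x, (ᾱ / A k x)^e * Set.indicator {y | k ≤ T y} (fun _ => (1:ℝ)) x ∂μ ≤
      (1 + (γ^e)⁻¹) / (1 - ((1-p) * (γ^e)⁻¹ + p * γ^e)) + 1 := by
  have hp0 : 0 < p := by linarith
  have hq0 : 0 < 1 - p := by linarith
  obtain ⟨c, hc_def⟩ : ∃ c : ℝ, c = γ ^ e := ⟨_, rfl⟩
  rw [← hc_def] at he
  have hc0 : 0 < c := by rw [hc_def]; exact pow_pos hγ0 e
  have hc1 : c < 1 := by rw [hc_def]; exact pow_lt_one₀ hγ0.le hγ1 he0.ne'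
  obtain ⟨β, hβ_def⟩ : ∃ b : ℝ, b = c⁻¹ := ⟨_, rfl⟩
  have hβ0 : 0 < β := by rw [hβ_def]; exact inv_pos.2 hc0
  have hβ1 : 1 < β := by rw [hβ_def]; exact (one_lt_inv₀ hc0).2 hc1
  have hcβ : c * β = 1 := by rw [hβ_def]; exact mul_inv_cancel₀ hc0.ne'
  obtain ⟨ρ, hρ_def⟩ : ∃ r : ℝ, r = (1-p) * β + p * c := ⟨_, rfl⟩
  have hρ0 : 0 < ρ := by rw [hρ_def]; exact add_pos (mul_pos hq0 hβ0) (mul_pos hp0 hc0)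
  have hρ1 : ρ < 1 := by
    have hqc : 1 - p < p * c := by rwa [div_lt_iff₀ hp0, mul_comm] at he
    have hprod : (0:ℝ) < (1 - c) * (p * c - (1-p)) :=
      mul_pos (sub_pos.2 hc1) (by linarith)
    have key : (1-p) + p * c^2 < c := by nlinarith [hprod]
    rw [hρ_def, hβ_def, ← div_eq_mul_inv, div_add' _ _ _ hc0.ne', div_lt_one hc0]
    linarith [key]
  obtain ⟨K, hK_def⟩ : ∃ k : ℝ, k = (1 + β) / (1 - ρ) + 1 := ⟨_, rfl⟩
  have hK1 : 1 ≤ K := by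
    have h1 : 0 ≤ (1 + β) / (1 - ρ) := div_nonneg (by linarith) (by linarith)
    rw [hK_def]; linarith
  -- zpow fact
  have hzpow : ∀ i : ℤ, i ≤ 0 → 1 ≤ γ ^ i := by
    intro i hi
    have h1 : 1 ≤ γ⁻¹ := ((one_lt_inv₀ hγ0).2 hγ1).le
    have h2 := one_le_zpow₀ h1 (neg_nonneg.2 hi)
    rwa [inv_zpow, ← zpow_neg, neg_neg] at h2
  have hαᾱ : ᾱ ≤ αmax := by
    rw [hαmax]
    calc ᾱ = ᾱ * 1 := (mul_one _).symm
      _ ≤ ᾱ * γ ^ j' := mul_le_mul_of_nonneg_left (hzpow j' hj') hᾱ.le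
  have hαmax0 : 0 < αmax := lt_of_lt_of_le hᾱ hαᾱ
  -- measurability
  have hAm : ∀ k, Measurable (A k) := fun k => ((hA k).mono (F.le k)).measurable
  obtain ⟨Y, hY_def⟩ : ∃ Y : ℕ → Ω → ℝ, Y = fun k x => (ᾱ / A k x)^e := ⟨_, rfl⟩
  have hYm : ∀ k, Measurable (Y k) := by
    intro k; simp only [hY_def]; exact (measurable_const.div (hAm k)).pow_const e
  have hYpos : ∀ k x, 0 < Y k x := by
    intro k x; simp only [hY_def]; exact pow_pos (div_pos hᾱ (hApos k x)) e
  -- a.e. lower bound on A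
  have hlow : ∀ k, ∀ᵐ x ∂μ, ᾱ * γ^k ≤ A k x := by
    intro k
    induction k with
    | zero =>
      filter_upwards with x
      rw [hA0 x, pow_zero, mul_one]
      calc ᾱ = ᾱ * 1 := (mul_one _).symm
        _ ≤ ᾱ * γ ^ j := mul_le_mul_of_nonneg_left (hzpow j hj) hᾱ.le
    | succ k ih =>
      filter_upwards [ih, hstep k] with x h1 h2
      have hγk : (0:ℝ) < γ ^ k := pow_pos hγ0 k
      rcases h2 with h2 | h2
      · rw [h2, pow_succ]
        calc ᾱ * (γ^k * γ) = γ * (ᾱ * γ^k) := by ring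
          _ ≤ γ * A k x := by
              exact mul_le_mul_of_nonneg_left h1 hγ0.le
      · rw [h2]
        apply le_min
        · calc ᾱ * γ^(k+1) ≤ ᾱ * 1 := by
                have : γ^(k+1) ≤ 1 := pow_le_one₀ hγ0.le hγ1.le
                exact mul_le_mul_of_nonneg_left this hᾱ.le
            _ = ᾱ := mul_one _
            _ ≤ αmax := hαᾱ
        · have hγγ : γ ≤ γ⁻¹ := le_trans hγ1.le ((one_lt_inv₀ hγ0).2 hγ1).le
          calc ᾱ * γ^(k+1) = (ᾱ * γ^k) * γ := by ring
            _ ≤ (ᾱ * γ^k) * γ⁻¹ := mul_le_mul_of_nonneg_left hγγ (by positivity)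
            _ = γ⁻¹ * (ᾱ * γ^k) := by ring
            _ ≤ γ⁻¹ * A k x := mul_le_mul_of_nonneg_left h1 (by positivity)
  -- a.e. upper bound on Y
  have hYbd : ∀ k, ∀ᵐ x ∂μ, Y k x ≤ ((γ^k)⁻¹)^e := by
    intro k
    filter_upwards [hlow k] with x hx
    simp only [hY_def]
    apply pow_le_pow_left₀ (div_pos hᾱ (hApos k x)).le
    rw [div_le_iff₀ (hApos k x)]
    have hγk : (0:ℝ) < γ ^ k := pow_pos hγ0 k
    calc ᾱ = (γ^k)⁻¹ * (ᾱ * γ^k) := by field_simp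
      _ ≤ (γ^k)⁻¹ * A k x := mul_le_mul_of_nonneg_left hx (by positivity)
      _ = (γ^k)⁻¹ * A k x := rfl
  -- indicator function
  obtain ⟨I, hI_def⟩ : ∃ I : Set Ω → Ω → ℝ, I = fun S => S.indicator (fun _ => 1) := ⟨_, rfl⟩
  have hI01 : ∀ (S : Set Ω) (x : Ω), 0 ≤ I S x ∧ I S x ≤ 1 := by
    intro S x
    by_cases h : x ∈ S <;> simp [hI_def, Set.indicator_apply, h]
  have hIm : ∀ (S : Set Ω), MeasurableSet S → Measurable (I S) := by
    intro S hS; simp only [hI_def]; exact measurable_const.indicator hS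
  -- generic integrability
  have hIntYu : ∀ (k : ℕ) (u : Ω → ℝ), Measurable u → (∀ x, 0 ≤ u x ∧ u x ≤ 1) →
      Integrable (fun x => Y k x * u x) μ := by
    intro k u hum hu01
    apply (integrable_const (((γ^k)⁻¹)^e : ℝ)).mono'
      (((hYm k).mul hum).aestronglyMeasurable)
    filter_upwards [hYbd k] with x hx
    rw [Real.norm_eq_abs, Pi.mul_apply, abs_of_nonneg (mul_nonneg (hYpos k x).le (hu01 x).1)]
    calc Y k x * u x ≤ Y k x * 1 := mul_le_mul_of_nonneg_left (hu01 x).2 (hYpos k x).le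
      _ = Y k x := mul_one _
      _ ≤ _ := hx
  have hImem : ∀ (S : Set Ω) (x : Ω), x ∈ S → I S x = 1 := by
    intro S x h; simp only [hI_def]; exact Set.indicator_of_mem h _
  have hInmem : ∀ (S : Set Ω) (x : Ω), x ∉ S → I S x = 0 := by
    intro S x h; simp only [hI_def]; exact Set.indicator_of_notMem h _
  -- sets for stopping time
  have hTset : ∀ k : ℕ, MeasurableSet[F k] {x | k < T x} := by
    intro k
    have h2 : {x : Ω | k < T x} = {x | T x ≤ k}ᶜ := by ext x; simp [not_le]
    rw [h2]; have h := (hT k).compl; simpa using h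
  obtain ⟨Z, hZ_def⟩ : ∃ Z : ℕ → Ω → ℝ, Z = fun k x => Y k x * I {y | k ≤ T y} x := ⟨_, rfl⟩
  have hZint : ∀ k, Integrable (Z k) μ := by
    intro k; simp only [hZ_def]
    exact hIntYu k (I {y | k ≤ T y}) (hIm _ (by have h := F.le k _ (hT.measurableSet_ge k); simpa using h)) (fun x => hI01 _ x)
  -- main recursion step
  have hrec : ∀ k, ∫ x, Z (k+1) x ∂μ ≤ ρ * ∫ x, Z k x ∂μ + (1 + β) := by
    intro k
    have hck := hcond k
    obtain ⟨U, hU_def⟩ : ∃ U : Set Ω, U = {x' | A (k+1) x' = min αmax (γ⁻¹ * A k x')} := ⟨_, rfl⟩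
    have hUmem : ∀ x, x ∈ U ↔ A (k+1) x = min αmax (γ⁻¹ * A k x) := by
      intro x; rw [hU_def]; exact Iff.rfl
    obtain ⟨E1, hE1_def⟩ : ∃ E : Set Ω, E = {x | k < T x} ∩ {x | A k x ≤ ᾱ} := ⟨_, rfl⟩
    have hE1mem : ∀ x, x ∈ E1 ↔ (k < T x ∧ A k x ≤ ᾱ) := by
      intro x; rw [hE1_def]; exact Set.mem_inter_iff _ _ _
    obtain ⟨E2, hE2_def⟩ : ∃ E : Set Ω, E = {x | k < T x} ∩ {x | ᾱ < A k x} := ⟨_, rfl⟩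
    have hE2mem : ∀ x, x ∈ E2 ↔ (k < T x ∧ ᾱ < A k x) := by
      intro x; rw [hE2_def]; exact Set.mem_inter_iff _ _ _
    have hE1k : MeasurableSet[F k] E1 := by
      rw [hE1_def]
      exact (hTset k).inter (measurableSet_le (hA k).measurable measurable_const)
    have hE2k : MeasurableSet[F k] E2 := by
      rw [hE2_def]
      exact (hTset k).inter (measurableSet_lt measurable_const (hA k).measurable)
    have hE1 : MeasurableSet E1 := F.le k _ hE1k
    have hE2 : MeasurableSet E2 := F.le k _ hE2k
    have hU : MeasurableSet U := by
      rw [hU_def]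
      exact measurableSet_eq_fun (hAm (k+1)) (measurable_const.min ((hAm k).const_mul γ⁻¹))
    obtain ⟨g, hg_def⟩ : ∃ g : Ω → ℝ, g = U.indicator (fun _ => (1:ℝ)) := ⟨_, rfl⟩
    rw [← hU_def, ← hg_def] at hck
    have hgI : g = I U := by rw [hg_def, hI_def]
    have hg01 : ∀ x, 0 ≤ g x ∧ g x ≤ 1 := by rw [hgI]; exact hI01 U
    have hgm : Measurable g := by rw [hgI]; exact hIm U hU
    have hgmem : ∀ x, x ∈ U → g x = 1 := by rw [hgI]; exact fun x => hImem U x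
    have hgnmem : ∀ x, x ∉ U → g x = 0 := by rw [hgI]; exact fun x => hInmem U x
    obtain ⟨φ, hφ_def⟩ : ∃ f : Ω → ℝ, f = fun x => Y k x * I E1 x := ⟨_, rfl⟩
    have hφm : Measurable φ := by rw [hφ_def]; exact (hYm k).mul (hIm E1 hE1)
    have hφnn : ∀ x, 0 ≤ φ x := by
      intro x; simp only [hφ_def]; exact mul_nonneg (hYpos k x).le (hI01 _ _).1
    have hφint : Integrable φ μ := by
      rw [hφ_def]; exact hIntYu k (I E1) (hIm E1 hE1) (fun x => hI01 _ _)
    have hφg_int : Integrable (fun x => φ x * g x) μ := by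
      have h1 : Integrable (fun x => Y k x * (I E1 x * g x)) μ :=
        hIntYu k _ ((hIm E1 hE1).mul hgm)
          (fun x => ⟨mul_nonneg (hI01 _ _).1 (hg01 x).1,
            mul_le_one₀ (hI01 _ _).2 (hg01 x).1 (hg01 x).2⟩)
      have h2 : (fun x => φ x * g x) = fun x => Y k x * (I E1 x * g x) := by
        funext x; simp only [hφ_def]; ring
      rw [h2]; exact h1
    have hg_int : Integrable g μ := by
      apply (integrable_const (1:ℝ)).mono' hgm.aestronglyMeasurable
      filter_upwards with x
      rw [Real.norm_eq_abs, abs_of_nonneg (hg01 x).1]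
      exact (hg01 x).2
    have hφsm : StronglyMeasurable[F k] φ := by
      apply Measurable.stronglyMeasurable
      rw [hφ_def]; simp only [hY_def, hI_def]
      exact (((measurable_const.div (hA k).measurable).pow_const e).mul
        (measurable_const.indicator hE1k))
    -- conditional expectation inequality
    have hcond_int : p * ∫ x, φ x ∂μ ≤ ∫ x, φ x * g x ∂μ := by
      have hmul : μ[fun x => φ x * g x | F k] =ᵐ[μ] fun x => φ x * (μ[g | F k]) x :=
        condExp_mul_of_stronglyMeasurable_left hφsm hφg_int hg_int
      have h2 : ∫ x, φ x * g x ∂μ = ∫ x, φ x * (μ[g|F k]) x ∂μ := by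
        rw [← integral_condExp (F.le k)]
        exact integral_congr_ae hmul
      rw [h2]
      have hcint : Integrable (fun x => φ x * (μ[g|F k]) x) μ := by
        apply Integrable.bdd_mul integrable_condExp hφm.aestronglyMeasurable
        filter_upwards [hYbd k] with x hx
        rw [Real.norm_eq_abs, abs_of_nonneg (hφnn x)]
        simp only [hφ_def]
        calc Y k x * I E1 x ≤ Y k x * 1 := mul_le_mul_of_nonneg_left (hI01 _ _).2 (hYpos k x).le
          _ = Y k x := mul_one _
          _ ≤ _ := hx
      have h3 : ∀ᵐ x ∂μ, p * φ x ≤ φ x * (μ[g|F k]) x := by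
        filter_upwards [hck] with x hx
        by_cases hxE : x ∈ E1
        · have hple : p ≤ (μ[g|F k]) x := hx ((hE1mem x).1 hxE)
          calc p * φ x = φ x * p := by ring
            _ ≤ φ x * (μ[g|F k]) x := mul_le_mul_of_nonneg_left hple (hφnn x)
        · have hz : φ x = 0 := by
            simp only [hφ_def, hInmem E1 x hxE, mul_zero]
          rw [hz]; simp
      calc p * ∫ x, φ x ∂μ = ∫ x, p * φ x ∂μ := (integral_const_mul p φ).symm
        _ ≤ ∫ x, φ x * (μ[g|F k]) x ∂μ := integral_mono_ae (hφint.const_mul p) hcint h3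
    -- the dominating function W
    obtain ⟨W, hW_def⟩ : ∃ W : Ω → ℝ, W = fun x =>
      β * φ x - (β - c) * (φ x * g x) + (I E1 x * g x + β * I E2 x) := ⟨_, rfl⟩
    have hE1g_int : Integrable (fun x => I E1 x * g x) μ := by
      apply (integrable_const (1:ℝ)).mono'
        (((hIm E1 hE1).mul hgm).aestronglyMeasurable)
      filter_upwards with x
      rw [Real.norm_eq_abs, Pi.mul_apply, abs_of_nonneg (mul_nonneg (hI01 _ _).1 (hg01 x).1)]
      exact mul_le_one₀ (hI01 _ _).2 (hg01 x).1 (hg01 x).2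
    have hE2_int : Integrable (I E2) μ := by
      apply (integrable_const (1:ℝ)).mono' ((hIm E2 hE2).aestronglyMeasurable)
      filter_upwards with x
      rw [Real.norm_eq_abs, abs_of_nonneg (hI01 _ _).1]
      exact (hI01 _ _).2
    have hWint : Integrable W μ := by
      rw [hW_def]
      exact (((hφint.const_mul β).sub (hφg_int.const_mul (β-c))).add
        (hE1g_int.add (hE2_int.const_mul β)))
    have hWval : ∫ x, W x ∂μ = β * (∫ x, φ x ∂μ) - (β - c) * (∫ x, φ x * g x ∂μ)
        + ((∫ x, I E1 x * g x ∂μ) + β * (∫ x, I E2 x ∂μ)) := by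
      simp only [hW_def]
      have e1 : ∫ x, (β * φ x - (β - c) * (φ x * g x)) + (I E1 x * g x + β * I E2 x) ∂μ
          = (∫ x, β * φ x - (β - c) * (φ x * g x) ∂μ)
            + ∫ x, I E1 x * g x + β * I E2 x ∂μ :=
        integral_add ((hφint.const_mul β).sub (hφg_int.const_mul (β-c)))
          (hE1g_int.add (hE2_int.const_mul β))
      have e2 : ∫ x, β * φ x - (β - c) * (φ x * g x) ∂μ
          = (∫ x, β * φ x ∂μ) - ∫ x, (β - c) * (φ x * g x) ∂μ :=
        integral_sub (hφint.const_mul β) (hφg_int.const_mul (β-c))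
      have e3 : ∫ x, I E1 x * g x + β * I E2 x ∂μ
          = (∫ x, I E1 x * g x ∂μ) + ∫ x, β * I E2 x ∂μ :=
        integral_add hE1g_int (hE2_int.const_mul β)
      rw [e1, e2, e3, integral_const_mul, integral_const_mul, integral_const_mul]
    -- pointwise a.e. domination
    have hZW : ∀ᵐ x ∂μ, Z (k+1) x ≤ W x := by
      filter_upwards [hstep k] with x hx
      by_cases hkT : k < T x
      · have hIT1 : I {y | (k+1) ≤ T y} x = 1 := hImem _ x hkT
        by_cases hAk : A k x ≤ ᾱ
        · have hIE1 : I E1 x = 1 := hImem E1 x ((hE1mem x).2 ⟨hkT, hAk⟩)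
          have hIE2 : I E2 x = 0 :=
            hInmem E2 x (fun h => absurd ((hE2mem x).1 h).2 (not_lt.2 hAk))
          by_cases hxU : x ∈ U
          · have hg1 : g x = 1 := hgmem x hxU
            have hgoal : Y (k+1) x ≤ c * Y k x + 1 := by
              have hA1 : A (k+1) x = min αmax (γ⁻¹ * A k x) := (hUmem x).1 hxU
              rcases le_total αmax (γ⁻¹ * A k x) with hm | hm
              · have hAeq : A (k+1) x = αmax := by rw [hA1, min_eq_left hm]
                have hY1 : Y (k+1) x ≤ 1 := by
                  simp only [hY_def]
                  apply pow_le_one₀ (div_nonneg hᾱ.le (hApos _ x).le)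
                  rw [hAeq, div_le_one hαmax0]; exact hαᾱ
                linarith [hY1, mul_nonneg hc0.le (hYpos k x).le]
              · have hAeq : A (k+1) x = γ⁻¹ * A k x := by rw [hA1, min_eq_right hm]
                have hYc : Y (k+1) x = c * Y k x := by
                  simp only [hY_def]
                  rw [hAeq]
                  have hdiv : ᾱ / (γ⁻¹ * A k x) = γ * (ᾱ / A k x) := by field_simp
                  rw [hdiv, mul_pow, hc_def]
                linarith [hYc.le, hYpos k x]
            simp only [hZ_def, hW_def, hφ_def, hIT1, hIE1, hIE2, hg1, mul_one, mul_zero, add_zero]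
            linarith [hgoal]
          · have hg0 : g x = 0 := hgnmem x hxU
            have hA1 : A (k+1) x = γ * A k x :=
              hx.resolve_right (fun h => hxU ((hUmem x).2 h))
            have hYβ : Y (k+1) x = β * Y k x := by
              simp only [hY_def]
              rw [hA1]
              have hdiv : ᾱ / (γ * A k x) = γ⁻¹ * (ᾱ / A k x) := by
                field_simp
              rw [hdiv, mul_pow, hβ_def, hc_def, inv_pow]
            simp only [hZ_def, hW_def, hφ_def, hIT1, hIE1, hIE2, hg0, mul_one, mul_zero,
              add_zero, zero_add, sub_zero]
            rw [hYβ]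
        · have hAk' : ᾱ < A k x := not_le.1 hAk
          have hIE1 : I E1 x = 0 :=
            hInmem E1 x (fun h => absurd ((hE1mem x).1 h).2 (not_le.2 hAk'))
          have hIE2 : I E2 x = 1 := hImem E2 x ((hE2mem x).2 ⟨hkT, hAk'⟩)
          have hYk1 : Y k x ≤ 1 := by
            simp only [hY_def]
            apply pow_le_one₀ (div_nonneg hᾱ.le (hApos _ x).le)
            rw [div_le_one (hApos k x)]; exact hAk'.le
          have hgoal : Y (k+1) x ≤ β := by
            rcases hx with h2 | h2
            · have hYβ : Y (k+1) x = β * Y k x := by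
                simp only [hY_def]
                rw [h2]
                have hdiv : ᾱ / (γ * A k x) = γ⁻¹ * (ᾱ / A k x) := by field_simp
                rw [hdiv, mul_pow, hβ_def, hc_def, inv_pow]
              rw [hYβ]
              calc β * Y k x ≤ β * 1 := mul_le_mul_of_nonneg_left hYk1 hβ0.le
                _ = β := mul_one _
            · rcases le_total αmax (γ⁻¹ * A k x) with hm | hm
              · have hAeq : A (k+1) x = αmax := by rw [h2, min_eq_left hm]
                have hY1 : Y (k+1) x ≤ 1 := by
                  simp only [hY_def]
                  apply pow_le_one₀ (div_nonneg hᾱ.le (hApos _ x).le)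
                  rw [hAeq, div_le_one hαmax0]; exact hαᾱ
                linarith [hβ1]
              · have hAeq : A (k+1) x = γ⁻¹ * A k x := by rw [h2, min_eq_right hm]
                have hYc : Y (k+1) x = c * Y k x := by
                  simp only [hY_def]
                  rw [hAeq]
                  have hdiv : ᾱ / (γ⁻¹ * A k x) = γ * (ᾱ / A k x) := by field_simp
                  rw [hdiv, mul_pow, hc_def]
                rw [hYc]
                calc c * Y k x ≤ c * 1 := mul_le_mul_of_nonneg_left hYk1 hc0.le
                  _ = c := mul_one _
                  _ ≤ β := by linarith
          simp only [hZ_def, hW_def, hφ_def, hIT1, hIE1, hIE2, mul_one, mul_zero, zero_mul,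
            add_zero, zero_add, sub_zero]
          linarith [hgoal]
      · have hIT0 : I {y | (k+1) ≤ T y} x = 0 :=
          hInmem _ x (fun h => hkT (Nat.lt_of_succ_le h))
        have hIE1 : I E1 x = 0 := hInmem E1 x (fun h => hkT ((hE1mem x).1 h).1)
        have hIE2 : I E2 x = 0 := hInmem E2 x (fun h => hkT ((hE2mem x).1 h).1)
        simp [hZ_def, hW_def, hφ_def, hIT0, hIE1, hIE2, hInmem _ x (show x ∉ {y | k < T y} from hkT)]
    -- combine
    have hφ_le_Z : ∫ x, φ x ∂μ ≤ ∫ x, Z k x ∂μ := by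
      apply integral_mono hφint (hZint k)
      intro x
      simp only [hφ_def, hZ_def]
      apply mul_le_mul_of_nonneg_left _ (hYpos k x).le
      by_cases hxE : x ∈ E1
      · rw [hImem E1 x hxE, hImem _ x (show x ∈ {y | k ≤ T y} from ((hE1mem x).1 hxE).1.le)]
      · rw [hInmem E1 x hxE]
        exact (hI01 _ _).1
    have hφ_nonneg : 0 ≤ ∫ x, φ x ∂μ := integral_nonneg hφnn
    have hE1g_le : ∫ x, I E1 x * g x ∂μ ≤ 1 := by
      calc ∫ x, I E1 x * g x ∂μ ≤ ∫ _, (1:ℝ) ∂μ := by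
            apply integral_mono hE1g_int (integrable_const 1)
            intro x
            exact mul_le_one₀ (hI01 _ _).2 (hg01 x).1 (hg01 x).2
        _ = 1 := by simp
    have hE2_le : ∫ x, I E2 x ∂μ ≤ 1 := by
      calc ∫ x, I E2 x ∂μ ≤ ∫ _, (1:ℝ) ∂μ := by
            apply integral_mono hE2_int (integrable_const 1)
            intro x; exact (hI01 _ _).2
        _ = 1 := by simp
    have h5 : (β - c) * (p * ∫ x, φ x ∂μ) ≤ (β - c) * ∫ x, φ x * g x ∂μ :=
      mul_le_mul_of_nonneg_left hcond_int (by linarith : (0:ℝ) ≤ β - c)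
    have h7 : ρ * ∫ x, φ x ∂μ ≤ ρ * ∫ x, Z k x ∂μ :=
      mul_le_mul_of_nonneg_left hφ_le_Z hρ0.le
    have heq : β * (∫ x, φ x ∂μ) - (β - c) * (p * ∫ x, φ x ∂μ) = ρ * ∫ x, φ x ∂μ := by
      rw [hρ_def]; ring
    have h8 : β * ∫ x, I E2 x ∂μ ≤ β * 1 := mul_le_mul_of_nonneg_left hE2_le hβ0.le
    calc ∫ x, Z (k+1) x ∂μ ≤ ∫ x, W x ∂μ := integral_mono_ae (hZint (k+1)) hWint hZW
      _ ≤ ρ * ∫ x, Z k x ∂μ + (1 + β) := by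
          rw [hWval]
          linarith [h5, h7, heq, h8, hE1g_le]
  -- induction: uniform bound
  have hmain : ∀ k, ∫ x, Z k x ∂μ ≤ K := by
    intro k
    induction k with
    | zero =>
      have hY0 : ∀ x, Y 0 x ≤ 1 := by
        intro x
        simp only [hY_def]
        apply pow_le_one₀ (div_nonneg hᾱ.le (hApos 0 x).le)
        rw [hA0 x, div_le_one (mul_pos hᾱ (lt_of_lt_of_le one_pos (hzpow j hj)))]
        calc ᾱ = ᾱ * 1 := (mul_one _).symm
          _ ≤ ᾱ * γ ^ j := mul_le_mul_of_nonneg_left (hzpow j hj) hᾱ.le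
      calc ∫ x, Z 0 x ∂μ ≤ ∫ _, (1:ℝ) ∂μ := by
            apply integral_mono (hZint 0) (integrable_const 1)
            intro x
            simp only [hZ_def]
            exact mul_le_one₀ (hY0 x) (hI01 _ _).1 (hI01 _ _).2
        _ = 1 := by simp
        _ ≤ K := hK1
    | succ k ih =>
      have h1 : ρ * ∫ x, Z k x ∂μ ≤ ρ * K := mul_le_mul_of_nonneg_left ih hρ0.le
      have hD : (1+β)/(1-ρ)*(1-ρ) = 1+β :=
        div_mul_cancel₀ _ (by linarith : (1:ℝ)-ρ ≠ 0)
      calc ∫ x, Z (k+1) x ∂μ ≤ ρ * ∫ x, Z k x ∂μ + (1 + β) := hrec k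
        _ ≤ ρ * K + (1+β) := by linarith
        _ ≤ K := by
            rw [hK_def]
            linarith [hD, hρ1.le]
  intro k
  constructor
  · have h := hZint k
    rw [hZ_def] at h
    simp only [hY_def, hI_def] at h
    exact h
  · have h := hmain k
    rw [hK_def, hρ_def, hβ_def, hc_def] at h
    simp only [hZ_def, hY_def, hI_def] at h
    exact h

lemma rho_fact (p c : ℝ) (hp : 1/2 < p) (hp1 : p < 1) (hc0 : 0 < c) (hc1 : c < 1)
    (he : (1-p)/p < c) : (1-p) * c⁻¹ + p * c < 1 := by
  have hp0 : 0 < p := by linarith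
  have hqc : 1 - p < p * c := by rwa [div_lt_iff₀ hp0, mul_comm] at he
  have hprod : (0:ℝ) < (1 - c) * (p * c - (1-p)) := mul_pos (sub_pos.2 hc1) (by linarith)
  have key : (1-p) + p * c^2 < c := by nlinarith [hprod]
  rw [← div_eq_mul_inv, div_add' _ _ _ hc0.ne', div_lt_one hc0]
  linarith [key]

lemma sum_mul_ineq (x y K L : ℝ) (hx : 0 ≤ x) (hy : 0 ≤ y) (hK : 0 ≤ K) (hL : 0 ≤ L) :
    x*K + y*L ≤ (x+y)*(K+L) := by nlinarith [mul_nonneg hx hL, mul_nonneg hy hK]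

lemma sum_le_mul' (x y u v : ℝ) (hx : 0 ≤ x) (hy : 0 ≤ y) (hu : 1 ≤ u) (hv : 1 ≤ v) :
    x + y ≤ x*u + y*v := by
  nlinarith [mul_le_mul_of_nonneg_left hu hx, mul_le_mul_of_nonneg_left hv hy]

/-- Expected total sample complexity of first-order STORM: with
per-iteration oracle cost `oc(α) = c_f·α⁻⁴ + c_g·α⁻²` and `γ > (2q)^{1/4}`, there is a
constant `C > 0` depending only on `p` and `γ` such that for every admissible process
and every `n ≥ 2`,
`E[TOC(min{T, n})] ≤ C·n·(log n)·((c_f/ᾱ⁴)·n^{4 log(1/γ)/log(p/q)} + (c_g/ᾱ²)·n^{2 log(1/γ)/log(p/q)})`. -/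
theorem stmt_13
    (p γ : ℝ) (hp : 1/2 < p) (hp1 : p < 1) (hγ0 : 0 < γ) (hγ1 : γ < 1)
    (hγq : (2 * (1 - p)) ^ ((1:ℝ)/4) < γ) :
    ∃ C > 0,
      ∀ (Ω : Type) (mΩ : MeasurableSpace Ω) (μ : Measure Ω),
        IsProbabilityMeasure μ →
      ∀ (F : Filtration ℕ mΩ) (A : ℕ → Ω → ℝ) (T : Ω → ℕ)
        (ᾱ c_f c_g : ℝ) (j j' : ℤ) (αmax : ℝ),
        0 < ᾱ → 0 ≤ c_f → 0 ≤ c_g → j ≤ 0 → j' ≤ 0 → αmax = ᾱ * γ ^ j' →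
        StronglyAdapted F A → (∀ k x, 0 < A k x) → IsStoppingTime F (fun x => (T x : WithTop ℕ)) →
        (∀ x, A 0 x = ᾱ * γ ^ j) →
        (∀ k, ∀ᵐ x ∂μ,
          A (k+1) x = γ * A k x ∨ A (k+1) x = min αmax (γ⁻¹ * A k x)) →
        (∀ k, ∀ᵐ x ∂μ, (k < T x ∧ A k x ≤ ᾱ) →
          p ≤ (μ[Set.indicator {x' | A (k+1) x' = min αmax (γ⁻¹ * A k x')}
                  (fun _ => (1:ℝ)) | F k]) x) →
        ∀ n : ℕ, 2 ≤ n →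
          ∫ x, (∑ k ∈ Finset.Icc 1 (min (T x) n),
              (c_f / (A k x)^4 + c_g / (A k x)^2)) ∂μ ≤
            C * n * Real.log n *
              (c_f / ᾱ^4 * (n : ℝ) ^ (4 * Real.log (1/γ) / Real.log (p/(1-p)))
                + c_g / ᾱ^2 * (n : ℝ) ^ (2 * Real.log (1/γ) / Real.log (p/(1-p)))) := by
  have hp0 : 0 < p := by linarith
  have hq0 : 0 < 1 - p := by linarith
  have h2q : 2 * (1 - p) < γ ^ (4:ℕ) := by
    have h1 : ((2 * (1 - p)) ^ ((1:ℝ)/4)) ^ (4:ℕ) < γ ^ (4:ℕ) :=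
      pow_lt_pow_left₀ hγq (Real.rpow_nonneg (by linarith) _) (by norm_num)
    have h2 : ((2 * (1 - p)) ^ ((1:ℝ)/4)) ^ (4:ℕ) = 2 * (1 - p) := by
      rw [← Real.rpow_natCast ((2 * (1 - p)) ^ ((1:ℝ)/4)) 4,
        ← Real.rpow_mul (by linarith : (0:ℝ) ≤ 2 * (1 - p))]
      norm_num
    linarith [h1, h2.le]
  have he4 : (1-p)/p < γ^(4:ℕ) := by
    have h3 : (1-p)/p < 2*(1-p) := by
      rw [div_lt_iff₀ hp0]; nlinarith
    linarith
  have hγ41 : γ^(4:ℕ) < 1 := pow_lt_one₀ hγ0.le hγ1 (by norm_num)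
  have hγ21 : γ^(2:ℕ) < 1 := pow_lt_one₀ hγ0.le hγ1 (by norm_num)
  have hγ40 : (0:ℝ) < γ^(4:ℕ) := pow_pos hγ0 4
  have hγ20 : (0:ℝ) < γ^(2:ℕ) := pow_pos hγ0 2
  have he2 : (1-p)/p < γ^(2:ℕ) := by
    have h44 : γ^(4:ℕ) ≤ γ^(2:ℕ) := pow_le_pow_of_le_one hγ0.le hγ1.le (by norm_num)
    linarith
  have hρ4 := rho_fact p (γ^(4:ℕ)) hp hp1 hγ40 hγ41 he4
  have hρ2 := rho_fact p (γ^(2:ℕ)) hp hp1 hγ20 hγ21 he2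
  obtain ⟨K4, hK4_def⟩ : ∃ k : ℝ, k = (1 + (γ^(4:ℕ))⁻¹) / (1 - ((1-p) * (γ^(4:ℕ))⁻¹ + p * γ^(4:ℕ))) + 1 := ⟨_, rfl⟩
  obtain ⟨K2, hK2_def⟩ : ∃ k : ℝ, k = (1 + (γ^(2:ℕ))⁻¹) / (1 - ((1-p) * (γ^(2:ℕ))⁻¹ + p * γ^(2:ℕ))) + 1 := ⟨_, rfl⟩
  have hK4pos : 0 < K4 := by
    have h1 : 0 ≤ (1 + (γ^(4:ℕ))⁻¹) / (1 - ((1-p) * (γ^(4:ℕ))⁻¹ + p * γ^(4:ℕ))) :=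
      div_nonneg (by positivity) (by linarith)
    rw [hK4_def]; linarith
  have hK2pos : 0 < K2 := by
    have h1 : 0 ≤ (1 + (γ^(2:ℕ))⁻¹) / (1 - ((1-p) * (γ^(2:ℕ))⁻¹ + p * γ^(2:ℕ))) :=
      div_nonneg (by positivity) (by linarith)
    rw [hK2_def]; linarith
  have hlog2 : (0:ℝ) < Real.log 2 := Real.log_pos (by norm_num)
  obtain ⟨C, hC_def⟩ : ∃ c : ℝ, c = (K4 + K2) / Real.log 2 := ⟨_, rfl⟩
  have hC : 0 < C := by rw [hC_def]; exact div_pos (by linarith) hlog2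
  refine ⟨C, hC, ?_⟩
  intro Ω mΩ μ hPM F A T ᾱ c_f c_g j j' αmax hᾱ hcf hcg hj hj' hαmax hAd hApos hT hA0 hstep hcond n hn
  have hb4 := aux_key p γ hp hp1 hγ0 hγ1 Ω mΩ μ hPM F A T ᾱ j j' αmax hᾱ hj hj' hαmax
    hAd hApos hT hA0 hstep hcond 4 (by norm_num) he4
  have hb2 := aux_key p γ hp hp1 hγ0 hγ1 Ω mΩ μ hPM F A T ᾱ j j' αmax hᾱ hj hj' hαmax
    hAd hApos hT hA0 hstep hcond 2 (by norm_num) he2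
  -- rewrite the truncated sum
  have hsum : ∀ x, (∑ k ∈ Finset.Icc 1 (min (T x) n), (c_f / (A k x)^4 + c_g / (A k x)^2))
      = ∑ k ∈ Finset.Icc 1 n, (c_f / (A k x)^4 + c_g / (A k x)^2) * Set.indicator {y | k ≤ T y} (fun _ => (1:ℝ)) x := by
    intro x
    have hfil : Finset.Icc 1 (min (T x) n) = (Finset.Icc 1 n).filter (fun k => k ≤ T x) := by
      ext k; simp only [Finset.mem_Icc, Finset.mem_filter, le_min_iff]; omega
    rw [hfil, Finset.sum_filter]
    apply Finset.sum_congr rfl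
    intro k _
    by_cases h : k ≤ T x
    · simp [Set.indicator_of_mem (show x ∈ {y | k ≤ T y} from h), h]
    · simp [Set.indicator_of_notMem (show x ∉ {y | k ≤ T y} from h), h]
  have hterm_eq : ∀ k : ℕ, (fun x => (c_f / (A k x)^4 + c_g / (A k x)^2) * Set.indicator {y | k ≤ T y} (fun _ => (1:ℝ)) x)
      = fun x => (c_f/ᾱ^4) * ((ᾱ / A k x)^(4:ℕ) * Set.indicator {y | k ≤ T y} (fun _ => (1:ℝ)) x)
        + (c_g/ᾱ^2) * ((ᾱ / A k x)^(2:ℕ) * Set.indicator {y | k ≤ T y} (fun _ => (1:ℝ)) x) := by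
    intro k
    funext x
    have h1 : A k x ≠ 0 := (hApos k x).ne'
    field_simp
  have hterm_int : ∀ k : ℕ, Integrable
      (fun x => (c_f / (A k x)^4 + c_g / (A k x)^2) * Set.indicator {y | k ≤ T y} (fun _ => (1:ℝ)) x) μ := by
    intro k
    rw [hterm_eq k]
    exact (((hb4 k).1.const_mul _).add ((hb2 k).1.const_mul _))
  have hterm_bd : ∀ k : ℕ, ∫ x, (c_f / (A k x)^4 + c_g / (A k x)^2) * Set.indicator {y | k ≤ T y} (fun _ => (1:ℝ)) x ∂μ
      ≤ (c_f/ᾱ^4) * K4 + (c_g/ᾱ^2) * K2 := by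
    intro k
    rw [hterm_eq k]
    rw [integral_add ((hb4 k).1.const_mul _) ((hb2 k).1.const_mul _),
      integral_const_mul, integral_const_mul]
    have h4 := (hb4 k).2
    have h2 := (hb2 k).2
    rw [← hK4_def] at h4
    rw [← hK2_def] at h2
    have hcf4 : (0:ℝ) ≤ c_f/ᾱ^4 := by positivity
    have hcg2 : (0:ℝ) ≤ c_g/ᾱ^2 := by positivity
    exact add_le_add (mul_le_mul_of_nonneg_left h4 hcf4) (mul_le_mul_of_nonneg_left h2 hcg2)
  have hLHS : ∫ x, (∑ k ∈ Finset.Icc 1 (min (T x) n),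
      (c_f / (A k x)^4 + c_g / (A k x)^2)) ∂μ ≤ (n:ℝ) * ((c_f/ᾱ^4) * K4 + (c_g/ᾱ^2) * K2) := by
    rw [integral_congr_ae (Filter.Eventually.of_forall hsum)]
    rw [integral_finset_sum _ (fun k _ => hterm_int k)]
    calc ∑ k ∈ Finset.Icc 1 n, ∫ x, (c_f / (A k x)^4 + c_g / (A k x)^2) * Set.indicator {y | k ≤ T y} (fun _ => (1:ℝ)) x ∂μ
        ≤ ∑ _k ∈ Finset.Icc 1 n, ((c_f/ᾱ^4) * K4 + (c_g/ᾱ^2) * K2) :=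
          Finset.sum_le_sum (fun k _ => hterm_bd k)
      _ = (n:ℝ) * ((c_f/ᾱ^4) * K4 + (c_g/ᾱ^2) * K2) := by
          rw [Finset.sum_const, Nat.card_Icc]
          simp only [nsmul_eq_mul]
          push_cast
          ring
  -- numeric comparison
  have hn1 : (1:ℝ) ≤ (n:ℝ) := by exact_mod_cast Nat.one_le_of_lt hn
  have hn2 : (2:ℝ) ≤ (n:ℝ) := by exact_mod_cast hn
  have hlogn : Real.log 2 ≤ Real.log n := Real.log_le_log (by norm_num) hn2
  have ht4 : 0 ≤ 4 * Real.log (1/γ) / Real.log (p/(1-p)) := by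
    have hl1 : 0 < Real.log (1/γ) := Real.log_pos (by rw [one_div]; exact (one_lt_inv₀ hγ0).2 hγ1)
    have hl2 : 0 < Real.log (p/(1-p)) := Real.log_pos ((one_lt_div hq0).2 (by linarith))
    positivity
  have ht2 : 0 ≤ 2 * Real.log (1/γ) / Real.log (p/(1-p)) := by
    have hl1 : 0 < Real.log (1/γ) := Real.log_pos (by rw [one_div]; exact (one_lt_inv₀ hγ0).2 hγ1)
    have hl2 : 0 < Real.log (p/(1-p)) := Real.log_pos ((one_lt_div hq0).2 (by linarith))
    positivity
  have hn4 : (1:ℝ) ≤ (n:ℝ) ^ (4 * Real.log (1/γ) / Real.log (p/(1-p))) :=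
    Real.one_le_rpow hn1 ht4
  have hn2' : (1:ℝ) ≤ (n:ℝ) ^ (2 * Real.log (1/γ) / Real.log (p/(1-p))) :=
    Real.one_le_rpow hn1 ht2
  have ha : 0 ≤ c_f/ᾱ^4 := by positivity
  have hbnn : 0 ≤ c_g/ᾱ^2 := by positivity
  have h1 : c_f/ᾱ^4 * K4 + c_g/ᾱ^2 * K2 ≤ (c_f/ᾱ^4 + c_g/ᾱ^2) * (K4 + K2) :=
    sum_mul_ineq _ _ _ _ ha hbnn hK4pos.le hK2pos.le
  have h2 : c_f/ᾱ^4 + c_g/ᾱ^2 ≤ c_f/ᾱ^4 * (n:ℝ) ^ (4 * Real.log (1/γ) / Real.log (p/(1-p)))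
      + c_g/ᾱ^2 * (n:ℝ) ^ (2 * Real.log (1/γ) / Real.log (p/(1-p))) :=
    sum_le_mul' _ _ _ _ ha hbnn hn4 hn2'
  have h3 : K4 + K2 = C * Real.log 2 := by
    rw [hC_def, div_mul_cancel₀ _ hlog2.ne']
  have h4 : C * Real.log 2 ≤ C * Real.log n := mul_le_mul_of_nonneg_left hlogn hC.le
  have hKK : (0:ℝ) ≤ K4 + K2 := by linarith
  calc ∫ x, (∑ k ∈ Finset.Icc 1 (min (T x) n),
        (c_f / (A k x)^4 + c_g / (A k x)^2)) ∂μ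
      ≤ (n:ℝ) * (c_f/ᾱ^4 * K4 + c_g/ᾱ^2 * K2) := hLHS
    _ ≤ (n:ℝ) * ((c_f/ᾱ^4 + c_g/ᾱ^2) * (K4 + K2)) :=
        mul_le_mul_of_nonneg_left h1 (by linarith)
    _ ≤ (n:ℝ) * ((c_f/ᾱ^4 * (n:ℝ) ^ (4 * Real.log (1/γ) / Real.log (p/(1-p)))
          + c_g/ᾱ^2 * (n:ℝ) ^ (2 * Real.log (1/γ) / Real.log (p/(1-p)))) * (C * Real.log n)) := by
        apply mul_le_mul_of_nonneg_left _ (by linarith : (0:ℝ) ≤ (n:ℝ))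
        apply mul_le_mul h2 (by linarith) hKK (by positivity)
    _ = C * n * Real.log n * (c_f/ᾱ^4 * (n:ℝ) ^ (4 * Real.log (1/γ) / Real.log (p/(1-p)))
          + c_g/ᾱ^2 * (n:ℝ) ^ (2 * Real.log (1/γ) / Real.log (p/(1-p)))) := by ring
end

section
/- Suppose the per-iteration oracle cost is oc(α) = c_f·α^{−4} + c_g·α^{−2} for constants c_f, c_g ≥ 0, and let c' > 1 be a constant. Then there exists a constant C > 0, depending only on p and c', such that for every integer n ≥ 2, if γ ≥ max{ (2q)^{1/4}, (q/p)^{log(c')/log n} } (so that n^{log(1/γ)/log(p/q)} ≤ c'), then E[ TOC(min{T, n}) ] ≤ C · n · (log n) · ( c_f/ᾱ⁴ + c_g/ᾱ² ). -/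
open MeasureTheory ProbabilityTheory

private lemma zpow_eq_exp {x : ℝ} (hx : 0 < x) (k : ℤ) :
    x ^ k = Real.exp (k * Real.log x) := by
  rw [← Real.log_zpow, Real.exp_log (zpow_pos hx k)]

private lemma zpow_anti_of_lt_one {γ : ℝ} (h0 : 0 < γ) (h1 : γ < 1) {a b : ℤ}
    (hab : a ≤ b) : γ ^ b ≤ γ ^ a := by
  rw [zpow_eq_exp h0, zpow_eq_exp h0]
  have hlog : Real.log γ < 0 := Real.log_neg h0 h1
  have hc : (a : ℝ) ≤ (b : ℝ) := by exact_mod_cast hab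
  exact Real.exp_le_exp.2 (by nlinarith)

private lemma zpow_mono_of_one_lt' {R : ℝ} (h1 : 1 < R) {a b : ℤ} (hab : a ≤ b) :
    R ^ a ≤ R ^ b := by
  rw [zpow_eq_exp (by linarith), zpow_eq_exp (by linarith)]
  have hlog : 0 < Real.log R := Real.log_pos h1
  have hc : (a : ℝ) ≤ (b : ℝ) := by exact_mod_cast hab
  exact Real.exp_le_exp.2 (by nlinarith)

private lemma zpow_le_one_iff' {γ : ℝ} (h0 : 0 < γ) (h1 : γ < 1) {e : ℤ} :
    γ ^ e ≤ 1 ↔ 0 ≤ e := by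
  constructor
  · intro h; by_contra hc; push_neg at hc
    have h2 : γ ^ (-1 : ℤ) ≤ γ ^ e := zpow_anti_of_lt_one h0 h1 (by omega)
    rw [zpow_neg_one] at h2
    have h3 : γ⁻¹ ≤ 1 := le_trans h2 h
    have h4 : γ * γ⁻¹ = 1 := mul_inv_cancel₀ (ne_of_gt h0)
    nlinarith
  · intro h
    simpa using zpow_anti_of_lt_one h0 h1 h

private lemma max_one_zpow {R : ℝ} (h1 : 1 < R) (e : ℤ) :
    max 1 (R ^ e) = R ^ (max e 0) := by
  rcases le_total e 0 with h | h
  · rw [max_eq_right h, zpow_zero, max_eq_left (by simpa using zpow_mono_of_one_lt' h1 h)]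
  · rw [max_eq_left h, max_eq_right (by simpa using zpow_mono_of_one_lt' h1 h)]

private lemma integrable_of_bdd {Ω : Type} {mΩ : MeasurableSpace Ω} {μ : Measure Ω}
    [IsFiniteMeasure μ] {f : Ω → ℝ} (hf : AEStronglyMeasurable f μ) {c : ℝ}
    (h : ∀ᵐ x ∂μ, ‖f x‖ ≤ c) : Integrable f μ :=
  (integrable_const c).mono' hf h

private lemma tower_aux {Ω : Type} {m : MeasurableSpace Ω} {mΩ : MeasurableSpace Ω}
    {μ : Measure Ω} [IsProbabilityMeasure μ] (hm : m ≤ mΩ)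
    {X : Ω → ℝ} (hXm : StronglyMeasurable[m] X) (hX0 : ∀ x, 0 ≤ X x)
    (hXi : Integrable X μ) {B : Set Ω} (hB : MeasurableSet[mΩ] B)
    {p : ℝ}
    (hp : ∀ᵐ x ∂μ, X x ≠ 0 → p ≤ (μ[B.indicator (fun _ => (1:ℝ)) | m]) x) :
    p * ∫ x, X x ∂μ ≤ ∫ x, X x * B.indicator (fun _ => (1:ℝ)) x ∂μ := by
  set g := μ[B.indicator (fun _ => (1:ℝ)) | m] with hgdef
  have hBint : Integrable (B.indicator fun _ => (1:ℝ)) μ := (integrable_const 1).indicator hB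
  have hXBeq : (fun x => X x * B.indicator (fun _ => (1:ℝ)) x) = B.indicator X := by
    ext x; by_cases hx : x ∈ B <;> simp [hx]
  have hXB : Integrable (fun x => X x * B.indicator (fun _ => (1:ℝ)) x) μ := by
    rw [hXBeq]; exact hXi.indicator hB
  have hmul : μ[(fun x => X x * B.indicator (fun _ => (1:ℝ)) x) | m]
      =ᵐ[μ] fun x => X x * g x := by
    have := condExp_mul_of_stronglyMeasurable_left hXm hXB hBint
    exact this
  have hint : ∫ x, X x * B.indicator (fun _ => (1:ℝ)) x ∂μ = ∫ x, X x * g x ∂μ := by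
    calc ∫ x, X x * B.indicator (fun _ => (1:ℝ)) x ∂μ
        = ∫ x, (μ[(fun x => X x * B.indicator (fun _ => (1:ℝ)) x) | m]) x ∂μ :=
          (integral_condExp hm).symm
      _ = ∫ x, X x * g x ∂μ := integral_congr_ae hmul
  have hg0 : 0 ≤ᵐ[μ] g := condExp_nonneg (by
    exact ae_of_all μ fun x => Set.indicator_nonneg (fun _ _ => zero_le_one) x)
  have hg1 : g ≤ᵐ[μ] fun _ => (1:ℝ) := by
    have h1 : μ[(fun _ => (1:ℝ)) | m] = fun _ => (1:ℝ) := condExp_const hm 1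
    have := condExp_mono (μ := μ) (m := m) hBint (integrable_const 1)
      (ae_of_all μ fun x => Set.indicator_le_self' (fun _ _ => zero_le_one) x)
    rw [h1] at this
    exact this
  have hXg : Integrable (fun x => X x * g x) μ := by
    refine Integrable.mono' hXi
      (hXi.aestronglyMeasurable.mul (stronglyMeasurable_condExp.mono hm).aestronglyMeasurable) ?_
    filter_upwards [hg0, hg1] with x h0 h1
    have : |X x * g x| = X x * g x := abs_of_nonneg (mul_nonneg (hX0 x) h0)
    rw [Real.norm_eq_abs, this]
    calc X x * g x ≤ X x * 1 := mul_le_mul_of_nonneg_left h1 (hX0 x)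
    _ = X x := mul_one _
  rw [hint]
  rw [← integral_const_mul]
  refine integral_mono_ae (hXi.const_mul p) hXg ?_
  filter_upwards [hp, hg0] with x hx h0
  by_cases hX : X x = 0
  · simp [hX]
  · have := hx hX
    calc p * X x ≤ g x * X x := mul_le_mul_of_nonneg_right this (hX0 x)
    _ = X x * g x := mul_comm _ _

private lemma star_aux {p c' γ : ℝ} (hp : 1/2 < p) (hp1 : p < 1) (hc' : 1 < c')
    (hγ0 : 0 < γ) (hγ1 : γ < 1) {n : ℕ} (hn : 2 ≤ n)
    (hγa : (2*(1-p)) ^ ((1:ℝ)/4) ≤ γ)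
    (hγb : ((1-p)/p) ^ (Real.log c' / Real.log n) ≤ γ)
    {m : ℤ} (hm : 0 ≤ m) :
    γ ^ (-(4*m)) ≤ c' ^ 4 * (1 + (p/(1-p)) ^ m / n) := by
  have hp0 : (0:ℝ) < p := by linarith
  have hq0 : (0:ℝ) < 1 - p := by linarith
  have hR : (1:ℝ) < p/(1-p) := (one_lt_div hq0).2 (by linarith)
  have hR0 : (0:ℝ) < p/(1-p) := by linarith
  have hn1 : (1:ℝ) < (n:ℝ) := by exact_mod_cast Nat.lt_of_lt_of_le one_lt_two hn
  have hn0 : (0:ℝ) < (n:ℝ) := by linarith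
  set a : ℝ := -Real.log γ with ha
  set ρ : ℝ := Real.log (p/(1-p)) with hρ
  set N : ℝ := Real.log n with hN
  set c4 : ℝ := 4 * Real.log c' with hc4
  have hlogγ : Real.log γ < 0 := Real.log_neg hγ0 hγ1
  have ha0 : 0 < a := by simp [ha]; linarith
  have hρ0 : 0 < ρ := Real.log_pos hR
  have hN0 : 0 < N := Real.log_pos hn1
  have hlogc : 0 < Real.log c' := Real.log_pos hc'
  have fact1 : a ≤ (Real.log c' / N) * ρ := by
    have h1 : Real.log (((1-p)/p) ^ (Real.log c' / Real.log n)) ≤ Real.log γ :=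
      Real.log_le_log (Real.rpow_pos_of_pos (by positivity) _) hγb
    rw [Real.log_rpow (by positivity)] at h1
    have h2 : Real.log ((1-p)/p) = -ρ := by
      rw [hρ, ← Real.log_inv]
      congr 1
      field_simp
    rw [h2] at h1
    have : -(Real.log c' / N * ρ) ≤ Real.log γ := by
      rw [hN]; linarith [h1]
    linarith [this]
  have fact2 : 4 * a ≤ ρ := by
    have h1 : Real.log ((2*(1-p)) ^ ((1:ℝ)/4)) ≤ Real.log γ :=
      Real.log_le_log (Real.rpow_pos_of_pos (by positivity) _) hγa
    rw [Real.log_rpow (by positivity)] at h1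
    have h2 : (2*(1-p))⁻¹ ≤ p/(1-p) := by
      rw [inv_eq_one_div, div_le_div_iff₀ (by positivity) hq0]
      nlinarith
    have h3 : Real.log ((2*(1-p))⁻¹) ≤ ρ := by
      rw [hρ]
      exact Real.log_le_log (by positivity) h2
    rw [Real.log_inv] at h3
    linarith
  have hlhs : γ ^ (-(4*m)) = Real.exp ((4*(m:ℝ)) * a) := by
    rw [zpow_eq_exp hγ0]
    congr 1
    push_cast
    rw [ha]; ring
  have hRm : (p/(1-p)) ^ m = Real.exp ((m:ℝ) * ρ) := zpow_eq_exp hR0 m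
  have hc'4 : c' ^ 4 = Real.exp c4 := by
    rw [hc4, show (4:ℝ) * Real.log c' = Real.log (c' ^ 4) by
      rw [Real.log_pow]; push_cast; ring]
    rw [Real.exp_log (by positivity)]
  have hnexp : (n:ℝ) = Real.exp N := by rw [hN, Real.exp_log hn0]
  have hm0 : (0:ℝ) ≤ (m:ℝ) := by exact_mod_cast hm
  clear_value a ρ N c4
  rcases le_or_gt ((m:ℝ) * ρ) N with hcase | hcase
  · have key : (4*(m:ℝ)) * a ≤ c4 := by
      have h1 : (4*(m:ℝ)) * a ≤ (4*(m:ℝ)) * ((Real.log c' / N) * ρ) :=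
        mul_le_mul_of_nonneg_left fact1 (by linarith)
      have h2 : (4*(m:ℝ)) * ((Real.log c' / N) * ρ) = 4 * (Real.log c' / N) * ((m:ℝ) * ρ) := by ring
      have h3 : 4 * (Real.log c' / N) * ((m:ℝ) * ρ) ≤ 4 * (Real.log c' / N) * N := by
        apply mul_le_mul_of_nonneg_left hcase (by positivity)
      have h4 : 4 * (Real.log c' / N) * N = c4 := by
        rw [hc4]; field_simp
      calc (4*(m:ℝ)) * a ≤ 4 * (m:ℝ) * ((Real.log c' / N) * ρ) := h1
        _ = 4 * (Real.log c' / N) * ((m:ℝ) * ρ) := h2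
        _ ≤ 4 * (Real.log c' / N) * N := h3
        _ = c4 := h4
    have h5 : γ ^ (-(4*m)) ≤ c' ^ 4 := by
      rw [hlhs, hc'4]; exact Real.exp_le_exp.2 key
    have h6 : 0 ≤ c' ^ 4 * ((p/(1-p)) ^ m / n) :=
      mul_nonneg (by positivity) (by positivity)
    have expand : c' ^ 4 * (1 + (p/(1-p)) ^ m / n)
        = c' ^ 4 + c' ^ 4 * ((p/(1-p)) ^ m / n) := by ring
    linarith
  · have hmN : N / ρ ≤ (m:ℝ) := by
      rw [div_le_iff₀ hρ0]; linarith
    have key : (4*(m:ℝ)) * a ≤ c4 + ((m:ℝ) * ρ - N) := by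
      have e1 : 4 * (N/ρ) * a ≤ 4 * (N/ρ) * ((Real.log c' / N) * ρ) :=
        mul_le_mul_of_nonneg_left fact1 (by positivity)
      have e1' : 4 * (N/ρ) * ((Real.log c' / N) * ρ) = c4 := by
        rw [hc4]; field_simp
      have e2 : ((m:ℝ) - N/ρ) * (4*a) ≤ ((m:ℝ) - N/ρ) * ρ :=
        mul_le_mul_of_nonneg_left fact2 (by linarith)
      have e2' : ((m:ℝ) - N/ρ) * ρ = (m:ℝ) * ρ - N := by
        field_simp
      have expand : 4*(m:ℝ)*a = 4*(N/ρ)*a + ((m:ℝ) - N/ρ)*(4*a) := by ring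
      linarith
    have hrhs : c' ^ 4 * ((p/(1-p)) ^ m / n) = Real.exp (c4 + ((m:ℝ) * ρ - N)) := by
      rw [hc'4, hRm, hnexp, ← Real.exp_sub, ← Real.exp_add]
    have h5 : γ ^ (-(4*m)) ≤ c' ^ 4 * ((p/(1-p)) ^ m / n) := by
      rw [hlhs, hrhs]; exact Real.exp_le_exp.2 key
    have h7 : 0 ≤ c' ^ 4 := by positivity
    have expand : c' ^ 4 * (1 + (p/(1-p)) ^ m / n)
        = c' ^ 4 + c' ^ 4 * ((p/(1-p)) ^ m / n) := by ring
    linarith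
set_option maxHeartbeats 1000000 in
/-- Simplified expected total sample complexity of first-order STORM:
with per-iteration oracle cost `oc(α) = c_f·α⁻⁴ + c_g·α⁻²` and `c' > 1`, there is a
constant `C > 0` depending only on `p` and `c'` such that for every admissible process
and every `n ≥ 2`, if `γ ≥ max{(2q)^{1/4}, (q/p)^{log c'/log n}}`, then
`E[TOC(min{T, n})] ≤ C·n·(log n)·(c_f/ᾱ⁴ + c_g/ᾱ²)`. -/
theorem stmt_14
    (p c' : ℝ) (hp : 1/2 < p) (hp1 : p < 1) (hc' : 1 < c') :
    ∃ C > 0,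
      ∀ (γ : ℝ), 0 < γ → γ < 1 →
      ∀ (Ω : Type) (mΩ : MeasurableSpace Ω) (μ : Measure Ω),
        IsProbabilityMeasure μ →
      ∀ (F : Filtration ℕ mΩ) (A : ℕ → Ω → ℝ) (T : Ω → ℕ)
        (ᾱ c_f c_g : ℝ) (j j' : ℤ) (αmax : ℝ),
        0 < ᾱ → 0 ≤ c_f → 0 ≤ c_g → j ≤ 0 → j' ≤ 0 → αmax = ᾱ * γ ^ j' →
        Adapted F A → (∀ k x, 0 < A k x) → IsStoppingTime F (fun x => (T x : WithTop ℕ)) →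
        (∀ x, A 0 x = ᾱ * γ ^ j) →
        (∀ k, ∀ᵐ x ∂μ,
          A (k+1) x = γ * A k x ∨ A (k+1) x = min αmax (γ⁻¹ * A k x)) →
        (∀ k, ∀ᵐ x ∂μ, (k < T x ∧ A k x ≤ ᾱ) →
          p ≤ (μ[Set.indicator {x' | A (k+1) x' = min αmax (γ⁻¹ * A k x')}
                  (fun _ => (1:ℝ)) | F k]) x) →
        ∀ n : ℕ, 2 ≤ n →
          max ((2 * (1 - p)) ^ ((1:ℝ)/4)) (((1-p)/p) ^ (Real.log c' / Real.log n)) ≤ γ →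
          ∫ x, (∑ k ∈ Finset.Icc 1 (min (T x) n),
              (c_f / (A k x)^4 + c_g / (A k x)^2)) ∂μ ≤
            C * n * Real.log n * (c_f / ᾱ^4 + c_g / ᾱ^2) := by
  have hp0 : (0:ℝ) < p := by linarith
  have hq0 : (0:ℝ) < 1 - p := by linarith
  have hlog2 : (0:ℝ) < Real.log 2 := Real.log_pos one_lt_two
  refine ⟨3 * c' ^ 4 / Real.log 2, by positivity, ?_⟩
  intro γ hγ0 hγ1 Ω mΩ μ hμ F A T ᾱ c_f c_g j j' αmax hᾱ hcf hcg hj hj' hαmax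
    hAdap hApos hT hA0 h5 h6 n hn hγmax
  have hR1 : (1:ℝ) < p / (1 - p) := (one_lt_div hq0).2 (by linarith)
  have hR0 : (0:ℝ) < p / (1 - p) := by linarith
  have hγa : (2 * (1 - p)) ^ ((1:ℝ)/4) ≤ γ := le_trans (le_max_left _ _) hγmax
  have hγb : ((1-p)/p) ^ (Real.log c' / Real.log n) ≤ γ := le_trans (le_max_right _ _) hγmax
  have hlogγ : Real.log γ < 0 := Real.log_neg hγ0 hγ1
  have hn0 : (0:ℝ) < (n:ℝ) := by exact_mod_cast Nat.lt_of_lt_of_le Nat.zero_lt_two hn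
  have hDnn : 0 ≤ c_f / ᾱ^4 + c_g / ᾱ^2 := by positivity
  -- the weight process
  set W : ℕ → Ω → ℝ := fun k x =>
    max 1 (Real.exp (Real.log (p/(1-p)) * (Real.log (A k x / ᾱ) / Real.log γ))) with hWdef
  have hW1 : ∀ k x, 1 ≤ W k x := fun k x => le_max_left _ _
  have hW0 : ∀ k x, 0 ≤ W k x := fun k x => le_trans zero_le_one (hW1 k x)
  have hWid : ∀ (k : ℕ) (x : Ω) (e : ℤ), A k x = ᾱ * γ ^ e →
      W k x = max 1 ((p/(1-p)) ^ e) := by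
    intro k x e he
    have h1 : A k x / ᾱ = γ ^ e := by rw [he]; field_simp
    have hlogne : Real.log γ ≠ 0 := ne_of_lt hlogγ
    simp only [hWdef]
    rw [h1, Real.log_zpow, zpow_eq_exp hR0]
    congr 2
    field_simp
  -- measurability
  have hAmF : ∀ k, Measurable[F k] (A k) := fun k => hAdap k
  have hAm : ∀ k, Measurable (A k) := fun k => (hAmF k).mono (F.le k) le_rfl
  have hWmF : ∀ k, Measurable[F k] (W k) := by
    intro k
    apply Measurable.max measurable_const
    exact ((((hAmF k).div_const ᾱ).log.div_const (Real.log γ)).const_mul _).exp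
  have hWm : ∀ k, Measurable (W k) := fun k => (hWmF k).mono (F.le k) le_rfl
  have hTsetF : ∀ k : ℕ, MeasurableSet[F k] {x | k+1 ≤ T x} := by
    intro k
    convert (hT k).compl using 1
    ext x; simp only [Set.mem_setOf_eq, Set.mem_compl_iff, not_le]; exact (WithTop.coe_lt_coe.trans Nat.lt_iff_add_one_le).symm
  have hTset : ∀ k : ℕ, MeasurableSet {x | k ≤ T x} := by
    intro k
    cases k with
    | zero =>
      have h : {x : Ω | 0 ≤ T x} = Set.univ := by ext x; simp
      rw [h]; exact MeasurableSet.univ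
    | succ k => exact F.le k _ (hTsetF k)
  -- exponent representation
  have hgood : ∀ᵐ x ∂μ, ∀ k, A (k+1) x = γ * A k x ∨ A (k+1) x = min αmax (γ⁻¹ * A k x) :=
    ae_all_iff.2 h5
  have hexp : ∀ᵐ x ∂μ, ∀ k : ℕ, ∃ e : ℤ, A k x = ᾱ * γ ^ e ∧ e ≤ (k:ℤ) := by
    filter_upwards [hgood] with x hx
    intro k
    induction k with
    | zero => exact ⟨j, hA0 x, by exact_mod_cast hj⟩
    | succ k ih =>
      obtain ⟨e, he, hek⟩ := ih
      rcases hx k with hbr | hbr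
      · refine ⟨e+1, ?_, by push_cast; omega⟩
        rw [hbr, he, zpow_add_one₀ (ne_of_gt hγ0)]; ring
      · refine ⟨max j' (e-1), ?_, by push_cast; omega⟩
        rw [hbr, hαmax, he]
        have hinv : γ⁻¹ * (ᾱ * γ ^ e) = ᾱ * γ ^ (e-1) := by
          rw [zpow_sub_one₀ (ne_of_gt hγ0)]; ring
        rw [hinv]
        rcases le_total j' (e-1) with h | h
        · rw [max_eq_right h]
          exact min_eq_right (mul_le_mul_of_nonneg_left (zpow_anti_of_lt_one hγ0 hγ1 h) hᾱ.le)
        · rw [max_eq_left h]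
          exact min_eq_left (mul_le_mul_of_nonneg_left (zpow_anti_of_lt_one hγ0 hγ1 h) hᾱ.le)
  have hWbd : ∀ᵐ x ∂μ, ∀ k : ℕ, W k x ≤ (p/(1-p)) ^ (k:ℤ) := by
    filter_upwards [hexp] with x hx k
    obtain ⟨e, he, hek⟩ := hx k
    rw [hWid k x e he]
    apply max_le
    · simpa using zpow_mono_of_one_lt' hR1 (by exact_mod_cast Int.ofNat_nonneg k : (0:ℤ) ≤ (k:ℤ))
    · exact zpow_mono_of_one_lt' hR1 hek
  -- integrability of the truncated weight
  have hf1int : ∀ k : ℕ, Integrable (fun x => if k ≤ T x then W k x else 0) μ := by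
    intro k
    apply integrable_of_bdd (c := (p/(1-p)) ^ (k:ℤ))
      (Measurable.ite (hTset k) (hWm k) measurable_const).aestronglyMeasurable
    filter_upwards [hWbd] with x hx
    rw [Real.norm_eq_abs]
    by_cases h : k ≤ T x
    · rw [if_pos h, abs_of_nonneg (hW0 k x)]; exact hx k
    · rw [if_neg h, abs_zero]; exact (zpow_pos hR0 _).le
  -- the key one-step estimate
  have hstep : ∀ k : ℕ,
      (∫ x, (if k+1 ≤ T x then W (k+1) x else 0) ∂μ) ≤
        (∫ x, (if k ≤ T x then W k x else 0) ∂μ) + 1 := by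
    intro k
    set B : Set Ω := {x' | A (k+1) x' = min αmax (γ⁻¹ * A k x')} with hBdef
    have hBmeas : MeasurableSet B :=
      measurableSet_eq_fun (hAm (k+1)) (measurable_const.min ((hAm k).const_mul γ⁻¹))
    set G : Set Ω := {x | k+1 ≤ T x} ∩ {x | A k x ≤ ᾱ} with hGdef
    have hGmeasF : MeasurableSet[F k] G := by
      apply (hTsetF k).inter
      exact (hAmF k) measurableSet_Iic
    have hGmeas : MeasurableSet G := F.le k _ hGmeasF
    set H : Set Ω := {x | k+1 ≤ T x} ∩ {x | ᾱ < A k x} with hHdef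
    have hHmeas : MeasurableSet H := by
      apply (F.le k _ (hTsetF k)).inter
      exact (hAm k) measurableSet_Ioi
    have hu0 : ∀ x, 0 ≤ G.indicator (W k) x :=
      fun x => Set.indicator_nonneg (fun y _ => hW0 k y) x
    have humeas : Measurable (G.indicator (W k)) := (hWm k).indicator hGmeas
    have huF : StronglyMeasurable[F k] (G.indicator (W k)) :=
      ((hWmF k).stronglyMeasurable).indicator hGmeasF
    have huself : ∀ᵐ x ∂μ, ‖G.indicator (W k) x‖ ≤ (p/(1-p)) ^ (k:ℤ) := by
      filter_upwards [hWbd] with x hx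
      rw [Real.norm_eq_abs, abs_of_nonneg (hu0 x)]
      exact le_trans (Set.indicator_le_self' (fun y _ => hW0 k y) x) (hx k)
    have huint : Integrable (G.indicator (W k)) μ :=
      integrable_of_bdd humeas.aestronglyMeasurable huself
    have hv0 : ∀ x, 0 ≤ G.indicator (W k) x * B.indicator (fun _ => (1:ℝ)) x :=
      fun x => mul_nonneg (hu0 x) (Set.indicator_nonneg (fun _ _ => zero_le_one) x)
    have hvint : Integrable (fun x => G.indicator (W k) x * B.indicator (fun _ => (1:ℝ)) x) μ := by
      apply integrable_of_bdd (c := (p/(1-p)) ^ (k:ℤ))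
        (humeas.mul (measurable_const.indicator hBmeas)).aestronglyMeasurable
      filter_upwards [huself] with x hx
      rw [Real.norm_eq_abs, Pi.mul_apply, abs_mul]
      calc |G.indicator (W k) x| * |B.indicator (fun _ => (1:ℝ)) x|
          ≤ |G.indicator (W k) x| * 1 := by
            apply mul_le_mul_of_nonneg_left _ (abs_nonneg _)
            rcases Set.indicator_eq_zero_or_self B (fun _ => (1:ℝ)) x with h | h <;> rw [h] <;> simp
        _ = |G.indicator (W k) x| := mul_one _
        _ ≤ (p/(1-p)) ^ (k:ℤ) := by rw [← Real.norm_eq_abs]; exact hx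
    have hGBint : Integrable ((G ∩ B).indicator (fun _ => (1:ℝ))) μ :=
      (integrable_const 1).indicator (hGmeas.inter hBmeas)
    have hHW : ∀ᵐ x ∂μ, ‖H.indicator (W k) x‖ ≤ (p/(1-p)) ^ (k:ℤ) := by
      filter_upwards [hWbd] with x hx
      rw [Real.norm_eq_abs, abs_of_nonneg (Set.indicator_nonneg (fun y _ => hW0 k y) x)]
      exact le_trans (Set.indicator_le_self' (fun y _ => hW0 k y) x) (hx k)
    have hHWint : Integrable (H.indicator (W k)) μ :=
      integrable_of_bdd ((hWm k).indicator hHmeas).aestronglyMeasurable hHW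
    -- pointwise a.e. inequality
    have hpt : ∀ᵐ x ∂μ, (if k+1 ≤ T x then W (k+1) x else 0) ≤
        (p/(1-p)) * G.indicator (W k) x
          - ((p/(1-p)) - ((1-p)/p)) * (G.indicator (W k) x * B.indicator (fun _ => (1:ℝ)) x)
          + (G ∩ B).indicator (fun _ => (1:ℝ)) x + H.indicator (W k) x := by
      filter_upwards [hexp, h5 k] with x hx hbr
      obtain ⟨e, he, hek⟩ := hx k
      by_cases hTx : k+1 ≤ T x
      · rw [if_pos hTx]
        by_cases hAx : A k x ≤ ᾱ
        · have hxG : x ∈ G := ⟨hTx, hAx⟩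
          have hxH : x ∉ H := fun h => absurd hAx (not_le.2 h.2)
          have he0 : 0 ≤ e := by
            apply (zpow_le_one_iff' hγ0 hγ1).1
            rw [he] at hAx
            nlinarith
          have hWk : W k x = (p/(1-p)) ^ e := by
            rw [hWid k x e he]
            exact max_eq_right (by simpa using zpow_mono_of_one_lt' hR1 he0)
          rw [Set.indicator_of_notMem hxH, Set.indicator_of_mem hxG]
          by_cases hxB : x ∈ B
          · have hmin : A (k+1) x = ᾱ * γ ^ (max j' (e-1)) := by
              have hxB' : A (k+1) x = min αmax (γ⁻¹ * A k x) := hxB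
              rw [hxB', hαmax, he]
              have hinv : γ⁻¹ * (ᾱ * γ ^ e) = ᾱ * γ ^ (e-1) := by
                rw [zpow_sub_one₀ (ne_of_gt hγ0)]; ring
              rw [hinv]
              rcases le_total j' (e-1) with h | h
              · rw [max_eq_right h]
                exact min_eq_right
                  (mul_le_mul_of_nonneg_left (zpow_anti_of_lt_one hγ0 hγ1 h) hᾱ.le)
              · rw [max_eq_left h]
                exact min_eq_left
                  (mul_le_mul_of_nonneg_left (zpow_anti_of_lt_one hγ0 hγ1 h) hᾱ.le)
            have hWk1 : W (k+1) x = max 1 ((p/(1-p)) ^ (max j' (e-1))) := hWid _ _ _ hmin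
            have hxGB : x ∈ G ∩ B := Set.mem_inter hxG hxB
            rw [hWk1, Set.indicator_of_mem hxB, Set.indicator_of_mem hxGB]
            have key : max 1 ((p/(1-p)) ^ (max j' (e-1))) ≤ ((1-p)/p) * W k x + 1 := by
              by_cases h1e : 1 ≤ e
              · have hmax : max j' (e-1) = e - 1 := max_eq_right (by omega)
                rw [hmax, max_eq_right
                  (by simpa using zpow_mono_of_one_lt' hR1 (by omega : (0:ℤ) ≤ e-1))]
                have h2 : (p/(1-p)) ^ (e-1) = ((1-p)/p) * (p/(1-p)) ^ e := by
                  rw [zpow_sub_one₀ (ne_of_gt hR0), show ((p:ℝ)/(1-p))⁻¹ = (1-p)/p from inv_div p (1-p) ▸ rfl]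
                  ring
                rw [h2, hWk]
                linarith
              · have hmax0 : max j' (e-1) ≤ 0 := by omega
                rw [max_eq_left (by simpa using zpow_mono_of_one_lt' hR1 hmax0)]
                have hnn : 0 ≤ ((1-p)/p) * W k x :=
                  mul_nonneg (by positivity) (hW0 k x)
                linarith
            have harr : (p/(1-p)) * W k x - ((p/(1-p)) - ((1-p)/p)) * (W k x * 1) + 1
                + 0 = ((1-p)/p) * W k x + 1 := by ring
            linarith [key, harr]
          · have hbr' : A (k+1) x = γ * A k x := by
              rcases hbr with h | h
              · exact h
              · exact absurd h hxB
            have hA1 : A (k+1) x = ᾱ * γ ^ (e+1) := by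
              rw [hbr', he, zpow_add_one₀ (ne_of_gt hγ0)]; ring
            have hWk1 : W (k+1) x = (p/(1-p)) ^ (e+1) := by
              rw [hWid _ _ _ hA1]
              exact max_eq_right (by simpa using zpow_mono_of_one_lt' hR1 (by omega : (0:ℤ) ≤ e+1))
            have hBind : B.indicator (fun _ => (1:ℝ)) x = 0 := Set.indicator_of_notMem hxB _
            have hxGB : x ∉ G ∩ B := fun hh => hxB hh.2
            have hGBind : (G ∩ B).indicator (fun _ => (1:ℝ)) x = 0 :=
              Set.indicator_of_notMem hxGB _
            rw [hWk1, hBind, hGBind]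
            have h2 : (p/(1-p)) ^ (e+1) = (p/(1-p)) * (p/(1-p)) ^ e := by
              rw [zpow_add_one₀ (ne_of_gt hR0)]; ring
            rw [h2, hWk]
            linarith
        · -- A k x > ᾱ
          have hxG : x ∉ G := fun h => hAx h.2
          have hxH : x ∈ H := ⟨hTx, not_le.1 hAx⟩
          have helt : e < 0 := by
            by_contra hc
            push_neg at hc
            apply hAx
            rw [he]
            nlinarith [(zpow_le_one_iff' hγ0 hγ1).2 hc]
          have hWk : W k x = 1 := by
            rw [hWid k x e he]
            exact max_eq_left (by simpa using zpow_mono_of_one_lt' hR1 helt.le)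
          have hW1k : W (k+1) x = 1 := by
            rcases hbr with h | h
            · have hA1 : A (k+1) x = ᾱ * γ ^ (e+1) := by
                rw [h, he, zpow_add_one₀ (ne_of_gt hγ0)]; ring
              rw [hWid _ _ _ hA1]
              exact max_eq_left (by simpa using zpow_mono_of_one_lt' hR1 (by omega : e+1 ≤ 0))
            · have hmin : A (k+1) x = ᾱ * γ ^ (max j' (e-1)) := by
                rw [h, hαmax, he]
                have hinv : γ⁻¹ * (ᾱ * γ ^ e) = ᾱ * γ ^ (e-1) := by
                  rw [zpow_sub_one₀ (ne_of_gt hγ0)]; ring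
                rw [hinv]
                rcases le_total j' (e-1) with h' | h'
                · rw [max_eq_right h']
                  exact min_eq_right
                    (mul_le_mul_of_nonneg_left (zpow_anti_of_lt_one hγ0 hγ1 h') hᾱ.le)
                · rw [max_eq_left h']
                  exact min_eq_left
                    (mul_le_mul_of_nonneg_left (zpow_anti_of_lt_one hγ0 hγ1 h') hᾱ.le)
              rw [hWid _ _ _ hmin]
              exact max_eq_left
                (by simpa using zpow_mono_of_one_lt' hR1 (by omega : max j' (e-1) ≤ 0))
          have hxGB : x ∉ G ∩ B := fun hh => hxG hh.1
          rw [hW1k, Set.indicator_of_notMem hxG, Set.indicator_of_mem hxH,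
            Set.indicator_of_notMem hxGB, hWk]
          simp
      · rw [if_neg hTx]
        have hxG : x ∉ G := fun h => hTx h.1
        have hxH : x ∉ H := fun h => hTx h.1
        have hxGB : x ∉ G ∩ B := fun hh => hxG hh.1
        rw [Set.indicator_of_notMem hxG, Set.indicator_of_notMem hxH,
          Set.indicator_of_notMem hxGB]
        simp
    -- integrate
    have i1 : Integrable (fun x => (p/(1-p)) * G.indicator (W k) x) μ := huint.const_mul _
    have i2 : Integrable (fun x => ((p/(1-p)) - ((1-p)/p)) *
        (G.indicator (W k) x * B.indicator (fun _ => (1:ℝ)) x)) μ := hvint.const_mul _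
    have i12 : Integrable (fun x => (p/(1-p)) * G.indicator (W k) x
        - ((p/(1-p)) - ((1-p)/p)) * (G.indicator (W k) x * B.indicator (fun _ => (1:ℝ)) x)) μ :=
      i1.sub i2
    have i123 : Integrable (fun x => (p/(1-p)) * G.indicator (W k) x
        - ((p/(1-p)) - ((1-p)/p)) * (G.indicator (W k) x * B.indicator (fun _ => (1:ℝ)) x)
        + (G ∩ B).indicator (fun _ => (1:ℝ)) x) μ := i12.add hGBint
    have hrhsint : Integrable (fun x =>
        (p/(1-p)) * G.indicator (W k) x
          - ((p/(1-p)) - ((1-p)/p)) * (G.indicator (W k) x * B.indicator (fun _ => (1:ℝ)) x)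
          + (G ∩ B).indicator (fun _ => (1:ℝ)) x + H.indicator (W k) x) μ := i123.add hHWint
    have step1 := integral_mono_ae (hf1int (k+1)) hrhsint hpt
    have split : ∫ x, ((p/(1-p)) * G.indicator (W k) x
          - ((p/(1-p)) - ((1-p)/p)) * (G.indicator (W k) x * B.indicator (fun _ => (1:ℝ)) x)
          + (G ∩ B).indicator (fun _ => (1:ℝ)) x + H.indicator (W k) x) ∂μ
        = (p/(1-p)) * ∫ x, G.indicator (W k) x ∂μ
          - ((p/(1-p)) - ((1-p)/p)) * ∫ x, G.indicator (W k) x * B.indicator (fun _ => (1:ℝ)) x ∂μ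
          + ∫ x, (G ∩ B).indicator (fun _ => (1:ℝ)) x ∂μ + ∫ x, H.indicator (W k) x ∂μ := by
      rw [integral_add i123 hHWint, integral_add i12 hGBint, integral_sub i1 i2,
        integral_const_mul, integral_const_mul]
    have htower : p * ∫ x, G.indicator (W k) x ∂μ ≤
        ∫ x, G.indicator (W k) x * B.indicator (fun _ => (1:ℝ)) x ∂μ := by
      apply tower_aux (F.le k) huF hu0 huint hBmeas
      filter_upwards [h6 k] with x hx hux
      have hxG : x ∈ G := by
        by_contra hc
        exact hux (Set.indicator_of_notMem hc _)
      have h1 : k+1 ≤ T x := hxG.1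
      have h2 : A k x ≤ ᾱ := hxG.2
      exact hx ⟨by omega, h2⟩
    have hI0 : 0 ≤ ∫ x, G.indicator (W k) x ∂μ := integral_nonneg hu0
    have hc0 : 0 ≤ (p/(1-p)) - ((1-p)/p) := by
      have h2 : (1-p)/p ≤ 1 := (div_le_one hp0).2 (by linarith)
      linarith
    have hGB1 : ∫ x, (G ∩ B).indicator (fun _ => (1:ℝ)) x ∂μ ≤ 1 := by
      rw [integral_indicator_const (1:ℝ) (hGmeas.inter hBmeas)]
      simp only [smul_eq_mul, mul_one]
      calc (μ (G ∩ B)).toReal ≤ (μ Set.univ).toReal :=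
            ENNReal.toReal_mono (measure_ne_top μ _) (measure_mono (Set.subset_univ _))
        _ = 1 := by simp
    have i_uH : Integrable (fun x => G.indicator (W k) x + H.indicator (W k) x) μ :=
      huint.add hHWint
    have hsum0 : ∫ x, (G.indicator (W k) x + H.indicator (W k) x) ∂μ ≤
        ∫ x, (if k ≤ T x then W k x else 0) ∂μ := by
      apply integral_mono_ae i_uH (hf1int k)
      apply ae_of_all
      intro x
      dsimp only
      by_cases hxG : x ∈ G
      · have hAle : A k x ≤ ᾱ := hxG.2
        have hT1 : k+1 ≤ T x := hxG.1
        have hxH : x ∉ H := by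
          intro hh
          have : ᾱ < A k x := hh.2
          linarith
        rw [Set.indicator_of_mem hxG, Set.indicator_of_notMem hxH, add_zero,
          if_pos (by omega : k ≤ T x)]
      · rw [Set.indicator_of_notMem hxG, zero_add]
        by_cases hxH : x ∈ H
        · have hT1 : k+1 ≤ T x := hxH.1
          rw [Set.indicator_of_mem hxH, if_pos (by omega : k ≤ T x)]
        · rw [Set.indicator_of_notMem hxH]
          by_cases h : k ≤ T x
          · rw [if_pos h]; exact hW0 k x
          · rw [if_neg h]
    have hsum1 : ∫ x, (G.indicator (W k) x + H.indicator (W k) x) ∂μ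
        = (∫ x, G.indicator (W k) x ∂μ) + ∫ x, H.indicator (W k) x ∂μ :=
      integral_add huint hHWint
    have hsum : (∫ x, G.indicator (W k) x ∂μ) + ∫ x, H.indicator (W k) x ∂μ ≤
        ∫ x, (if k ≤ T x then W k x else 0) ∂μ := by
      rw [← hsum1]; exact hsum0
    have htow2 := mul_le_mul_of_nonneg_left htower hc0
    have hid : (p/(1-p)) * (∫ x, G.indicator (W k) x ∂μ)
        - ((p/(1-p)) - ((1-p)/p)) * (p * ∫ x, G.indicator (W k) x ∂μ)
        = ∫ x, G.indicator (W k) x ∂μ := by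
      field_simp
      ring
    rw [split] at step1
    linarith [step1, htow2, hGB1, hsum, hid]
  -- expectation of truncated weight
  have hVint : ∀ k : ℕ, (∫ x, (if k ≤ T x then W k x else 0) ∂μ) ≤ 1 + (k:ℝ) := by
    intro k
    induction k with
    | zero =>
      have h : (fun x => if 0 ≤ T x then W 0 x else 0) = fun _ => (1:ℝ) := by
        funext x
        rw [if_pos (Nat.zero_le _), hWid 0 x j (hA0 x)]
        exact max_eq_left (by simpa using zpow_mono_of_one_lt' hR1 hj)
      rw [h]
      simp
    | succ k ih =>
      calc (∫ x, (if k+1 ≤ T x then W (k+1) x else 0) ∂μ)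
          ≤ (∫ x, (if k ≤ T x then W k x else 0) ∂μ) + 1 := hstep k
        _ ≤ (1 + (k:ℝ)) + 1 := by linarith
        _ = 1 + ((k+1 : ℕ):ℝ) := by push_cast; ring
  -- pointwise cost bound
  have hcost : ∀ᵐ x ∂μ, ∀ k : ℕ, c_f / (A k x)^4 + c_g / (A k x)^2 ≤
      c' ^ 4 * (1 + W k x / n) * (c_f / ᾱ^4 + c_g / ᾱ^2) := by
    filter_upwards [hexp] with x hx k
    obtain ⟨e, he, hek⟩ := hx k
    have h4 : (A k x)^4 = ᾱ^4 * γ ^ (4*e) := by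
      rw [he, mul_pow, show ((γ:ℝ)^e)^(4:ℕ) = γ ^ (4*e) from by
        rw [← zpow_natCast (γ ^ e) 4, ← zpow_mul]; congr 1; ring]
    have h2 : (A k x)^2 = ᾱ^2 * γ ^ (2*e) := by
      rw [he, mul_pow, show ((γ:ℝ)^e)^(2:ℕ) = γ ^ (2*e) from by
        rw [← zpow_natCast (γ ^ e) 2, ← zpow_mul]; congr 1; ring]
    have hcf4 : c_f / (A k x)^4 = c_f / ᾱ^4 * γ ^ (-(4*e)) := by
      rw [h4, zpow_neg, div_mul_eq_div_div, div_eq_mul_inv]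
    have hcg2 : c_g / (A k x)^2 = c_g / ᾱ^2 * γ ^ (-(2*e)) := by
      rw [h2, zpow_neg, div_mul_eq_div_div, div_eq_mul_inv]
    have hmono1 : γ ^ (-(4*e)) ≤ γ ^ (-(4*max e 0)) :=
      zpow_anti_of_lt_one hγ0 hγ1 (by omega)
    have hmono2 : γ ^ (-(2*e)) ≤ γ ^ (-(4*max e 0)) :=
      zpow_anti_of_lt_one hγ0 hγ1 (by omega)
    have hstar := star_aux hp hp1 hc' hγ0 hγ1 hn hγa hγb (le_max_right e 0)
    have hWx : W k x = (p/(1-p)) ^ (max e 0) := by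
      rw [hWid k x e he, max_one_zpow hR1]
    calc c_f / (A k x)^4 + c_g / (A k x)^2
        = c_f / ᾱ^4 * γ ^ (-(4*e)) + c_g / ᾱ^2 * γ ^ (-(2*e)) := by rw [hcf4, hcg2]
      _ ≤ c_f / ᾱ^4 * γ ^ (-(4*max e 0)) + c_g / ᾱ^2 * γ ^ (-(4*max e 0)) :=
          add_le_add (mul_le_mul_of_nonneg_left hmono1 (by positivity))
            (mul_le_mul_of_nonneg_left hmono2 (by positivity))
      _ = γ ^ (-(4*max e 0)) * (c_f / ᾱ^4 + c_g / ᾱ^2) := by ring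
      _ ≤ (c' ^ 4 * (1 + (p/(1-p)) ^ (max e 0) / n)) * (c_f / ᾱ^4 + c_g / ᾱ^2) :=
          mul_le_mul_of_nonneg_right hstar hDnn
      _ = c' ^ 4 * (1 + W k x / n) * (c_f / ᾱ^4 + c_g / ᾱ^2) := by rw [hWx]
  -- rewrite the sum
  have hrw : (fun x => ∑ k ∈ Finset.Icc 1 (min (T x) n),
      (c_f / (A k x)^4 + c_g / (A k x)^2)) = fun x => ∑ k ∈ Finset.Icc 1 n,
      (if k ≤ min (T x) n then (c_f / (A k x)^4 + c_g / (A k x)^2) else 0) := by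
    funext x
    rw [← Finset.sum_filter]
    congr 1
    ext a
    simp only [Finset.mem_filter, Finset.mem_Icc]
    omega
  have hcost0 : ∀ (k : ℕ) x, 0 ≤ c_f / (A k x)^4 + c_g / (A k x)^2 := fun k x =>
    add_nonneg (div_nonneg hcf (by positivity)) (div_nonneg hcg (by positivity))
  have hgmeas : ∀ k : ℕ, Measurable (fun x =>
      if k ≤ min (T x) n then (c_f / (A k x)^4 + c_g / (A k x)^2) else 0) := by
    intro k
    have hset : MeasurableSet {x | k ≤ min (T x) n} := by
      have h : {x | k ≤ min (T x) n} = {x | k ≤ T x} ∩ {x | k ≤ n} := by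
        ext x; simp only [Set.mem_setOf_eq, Set.mem_inter_iff, le_min_iff]
      rw [h]
      exact (hTset k).inter (MeasurableSet.const _)
    exact Measurable.ite hset
      ((measurable_const.div ((hAm k).pow_const 4)).add
        (measurable_const.div ((hAm k).pow_const 2))) measurable_const
  have hKnn : ∀ k : ℕ, 0 ≤ c' ^ 4 * (1 + (p/(1-p)) ^ (k:ℤ) / n) * (c_f / ᾱ^4 + c_g / ᾱ^2) := by
    intro k
    apply mul_nonneg (mul_nonneg (by positivity) _) hDnn
    have := (zpow_pos hR0 (k:ℤ)).le
    positivity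
  have hgint : ∀ k : ℕ, Integrable (fun x =>
      if k ≤ min (T x) n then (c_f / (A k x)^4 + c_g / (A k x)^2) else 0) μ := by
    intro k
    apply integrable_of_bdd (c := c' ^ 4 * (1 + (p/(1-p)) ^ (k:ℤ) / n) * (c_f / ᾱ^4 + c_g / ᾱ^2))
      (hgmeas k).aestronglyMeasurable
    filter_upwards [hcost, hWbd] with x hx hb
    rw [Real.norm_eq_abs]
    by_cases h : k ≤ min (T x) n
    · rw [if_pos h, abs_of_nonneg (hcost0 k x)]
      calc c_f / (A k x)^4 + c_g / (A k x)^2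
          ≤ c' ^ 4 * (1 + W k x / n) * (c_f / ᾱ^4 + c_g / ᾱ^2) := hx k
        _ ≤ c' ^ 4 * (1 + (p/(1-p)) ^ (k:ℤ) / n) * (c_f / ᾱ^4 + c_g / ᾱ^2) := by
            apply mul_le_mul_of_nonneg_right _ hDnn
            apply mul_le_mul_of_nonneg_left _ (by positivity)
            have h1 : W k x / n ≤ (p/(1-p)) ^ (k:ℤ) / n :=
              (div_le_div_iff_of_pos_right hn0).2 (hb k)
            linarith
    · rw [if_neg h, abs_zero]
      exact hKnn k
  -- per-term integral bound
  have hterm : ∀ k : ℕ, 1 ≤ k → k ≤ n →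
      (∫ x, (if k ≤ min (T x) n then (c_f / (A k x)^4 + c_g / (A k x)^2) else 0) ∂μ) ≤
        3 * c' ^ 4 * (c_f / ᾱ^4 + c_g / ᾱ^2) := by
    intro k hk1 hkn
    set D := c_f / ᾱ^4 + c_g / ᾱ^2 with hDdef
    clear_value D
    have hind : (fun x => if k ≤ T x then (1:ℝ) else 0)
        = Set.indicator {x | k ≤ T x} (fun _ => (1:ℝ)) := by
      funext x
      by_cases h : k ≤ T x
      · have hm : x ∈ {x | k ≤ T x} := h
        rw [if_pos h, Set.indicator_of_mem hm]
      · have hm : x ∉ {x | k ≤ T x} := h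
        rw [if_neg h, Set.indicator_of_notMem hm]
    have hindint : Integrable (fun x => if k ≤ T x then (1:ℝ) else 0) μ := by
      rw [hind]; exact (integrable_const 1).indicator (hTset k)
    have hc'4nn : (0:ℝ) ≤ c' ^ 4 := by positivity
    have hc4D : 0 ≤ c' ^ 4 * D := mul_nonneg hc'4nn hDnn
    have hc4Dn : 0 ≤ c' ^ 4 * D / n := div_nonneg hc4D hn0.le
    have hbd : ∀ᵐ x ∂μ, (if k ≤ min (T x) n then (c_f / (A k x)^4 + c_g / (A k x)^2) else 0) ≤
        c' ^ 4 * D * (if k ≤ T x then (1:ℝ) else 0)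
          + (c' ^ 4 * D / n) * (if k ≤ T x then W k x else 0) := by
      filter_upwards [hcost] with x hx
      by_cases h : k ≤ min (T x) n
      · have hT' : k ≤ T x := le_trans h (min_le_left _ _)
        rw [if_pos h, if_pos hT', if_pos hT']
        calc c_f / (A k x)^4 + c_g / (A k x)^2 ≤ c' ^ 4 * (1 + W k x / n) * D := hx k
          _ = c' ^ 4 * D * 1 + c' ^ 4 * D / n * W k x := by field_simp
      · rw [if_neg h]
        have h1 : 0 ≤ c' ^ 4 * D * (if k ≤ T x then (1:ℝ) else 0) := by
          apply mul_nonneg hc4D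
          split <;> norm_num
        have h2 : 0 ≤ (c' ^ 4 * D / n) * (if k ≤ T x then W k x else 0) := by
          apply mul_nonneg hc4Dn
          split
          · exact hW0 k x
          · exact le_rfl
        exact add_nonneg h1 h2
    have hint2 : Integrable (fun x => c' ^ 4 * D * (if k ≤ T x then (1:ℝ) else 0)
        + (c' ^ 4 * D / n) * (if k ≤ T x then W k x else 0)) μ :=
      (hindint.const_mul _).add ((hf1int k).const_mul _)
    have step := integral_mono_ae (hgint k) hint2 hbd
    have hsplit2 : ∫ x, (c' ^ 4 * D * (if k ≤ T x then (1:ℝ) else 0)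
        + (c' ^ 4 * D / n) * (if k ≤ T x then W k x else 0)) ∂μ
        = c' ^ 4 * D * (∫ x, (if k ≤ T x then (1:ℝ) else 0) ∂μ)
          + (c' ^ 4 * D / n) * (∫ x, (if k ≤ T x then W k x else 0) ∂μ) := by
      rw [integral_add (hindint.const_mul _) ((hf1int k).const_mul _),
        integral_const_mul, integral_const_mul]
    have hmu1 : (∫ x, (if k ≤ T x then (1:ℝ) else 0) ∂μ) ≤ 1 := by
      rw [hind, integral_indicator_const (1:ℝ) (hTset k)]
      simp only [smul_eq_mul, mul_one]
      calc (μ {x | k ≤ T x}).toReal ≤ (μ Set.univ).toReal :=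
            ENNReal.toReal_mono (measure_ne_top μ _) (measure_mono (Set.subset_univ _))
        _ = 1 := by simp
    have hmu0 : 0 ≤ (∫ x, (if k ≤ T x then (1:ℝ) else 0) ∂μ) := by
      apply integral_nonneg
      intro x
      dsimp only
      split <;> norm_num
    have hV0 : 0 ≤ (∫ x, (if k ≤ T x then W k x else 0) ∂μ) := by
      apply integral_nonneg
      intro x
      dsimp only
      split
      · exact hW0 k x
      · exact le_rfl
    have hVk := hVint k
    have hkn' : (1:ℝ) + (k:ℝ) ≤ 2 * n := by
      have h1 : (k:ℝ) ≤ n := by exact_mod_cast hkn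
      have h2 : (1:ℝ) ≤ n := by exact_mod_cast Nat.one_le_of_lt (Nat.lt_of_lt_of_le Nat.one_lt_two hn)
      linarith
    have hfinal : c' ^ 4 * D * (∫ x, (if k ≤ T x then (1:ℝ) else 0) ∂μ)
        + (c' ^ 4 * D / n) * (∫ x, (if k ≤ T x then W k x else 0) ∂μ)
        ≤ 3 * c' ^ 4 * D := by
      have t1 : c' ^ 4 * D * (∫ x, (if k ≤ T x then (1:ℝ) else 0) ∂μ) ≤ c' ^ 4 * D := by
        calc c' ^ 4 * D * (∫ x, (if k ≤ T x then (1:ℝ) else 0) ∂μ)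
            ≤ c' ^ 4 * D * 1 := mul_le_mul_of_nonneg_left hmu1 hc4D
          _ = c' ^ 4 * D := mul_one _
      have t2 : (c' ^ 4 * D / n) * (∫ x, (if k ≤ T x then W k x else 0) ∂μ)
          ≤ (c' ^ 4 * D / n) * (2 * n) := by
        apply mul_le_mul_of_nonneg_left _ hc4Dn
        linarith
      have t3 : (c' ^ 4 * D / n) * (2 * n) = 2 * (c' ^ 4 * D) := by
        field_simp
      linarith
    linarith [step, hsplit2 ▸ step, hfinal]
  -- assemble
  rw [hrw, integral_finset_sum _ (fun k _ => hgint k)]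
  have hlogn : Real.log 2 ≤ Real.log n := by
    apply Real.log_le_log (by norm_num)
    exact_mod_cast hn
  calc ∑ k ∈ Finset.Icc 1 n,
        ∫ x, (if k ≤ min (T x) n then (c_f / (A k x)^4 + c_g / (A k x)^2) else 0) ∂μ
      ≤ ∑ k ∈ Finset.Icc 1 n, (3 * c' ^ 4 * (c_f / ᾱ^4 + c_g / ᾱ^2)) := by
        apply Finset.sum_le_sum
        intro k hk
        obtain ⟨hk1, hkn⟩ := Finset.mem_Icc.1 hk
        exact hterm k hk1 hkn
    _ = (n:ℝ) * (3 * c' ^ 4 * (c_f / ᾱ^4 + c_g / ᾱ^2)) := by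
        rw [Finset.sum_const, Nat.card_Icc]
        simp [nsmul_eq_mul]
    _ ≤ 3 * c' ^ 4 / Real.log 2 * n * Real.log n * (c_f / ᾱ^4 + c_g / ᾱ^2) := by
        have h1 : (n:ℝ) * (3 * c' ^ 4 * (c_f / ᾱ^4 + c_g / ᾱ^2))
            = 3 * c' ^ 4 / Real.log 2 * n * Real.log 2 * (c_f / ᾱ^4 + c_g / ᾱ^2) := by
          field_simp
        rw [h1]
        apply mul_le_mul_of_nonneg_right _ hDnn
        apply mul_le_mul_of_nonneg_left hlogn
        positivity
end
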